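/- Let {L_j}_{j≤n} be normal modal logics with pairwise disjoint signatures, each characterized by a class of Kripke frames. If every L_j has the finite model property (every formula not in L_j fails in some finite Kripke model of L_j), then the fusion ⊗_{j≤n} L_j also has the finite model property. -/

import Mathlib

/- ### μ-calculus: syntax and Kripke semantics -/

/-- μ-formulas over a modal signature `Λ`, with propositional symbols and
variables indexed by `ℕ`; negation applies to propositional symbols only. -/
inductive MuForm (Λ : Type) : Type where
  | prop : ℕ → MuForm Λ
  | nprop : ℕ → MuForm Λ
  | var : ℕ → MuForm Λ
  | and : MuForm Λ → MuForm Λ → MuForm Λ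
  | or : MuForm Λ → MuForm Λ → MuForm Λ
  | box : Λ → MuForm Λ → MuForm Λ
  | dia : Λ → MuForm Λ → MuForm Λ
  | mu : ℕ → MuForm Λ → MuForm Λ
  | nu : ℕ → MuForm Λ → MuForm Λ

/-- A Kripke model over signature `Λ` with set of worlds `W`. -/
structure KModel (Λ W : Type) where
  R : Λ → W → W → Prop
  V : ℕ → Set W

namespace MuForm

variable {Λ W : Type}

/-- The valuation `‖φ‖^M` of a μ-formula, where `env` interprets the variables;
least and greatest fixed points are taken in the complete lattice `Set W`. -/
def sem (M : KModel Λ W) (env : ℕ → Set W) : MuForm Λ → Set W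
  | prop p => M.V p
  | nprop p => (M.V p)ᶜ
  | var x => env x
  | and a b => sem M env a ∩ sem M env b
  | or a b => sem M env a ∪ sem M env b
  | box i a => {w | ∀ v, M.R i w v → v ∈ sem M env a}
  | dia i a => {w | ∃ v, M.R i w v ∧ v ∈ sem M env a}
  | mu x a => sInf {A : Set W | sem M (Function.update env x A) a ⊆ A}
  | nu x a => sSup {A : Set W | A ⊆ sem M (Function.update env x A) a}

/-- Free variables of a μ-formula. -/
def freeVars : MuForm Λ → Set ℕ
  | prop _ => ∅
  | nprop _ => ∅
  | var x => {x}
  | and a b => freeVars a ∪ freeVars b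
  | or a b => freeVars a ∪ freeVars b
  | box _ a => freeVars a
  | dia _ a => freeVars a
  | mu x a => freeVars a \ {x}
  | nu x a => freeVars a \ {x}

/-- A μ-formula contains no fixed-point operators. -/
def noFix : MuForm Λ → Prop
  | prop _ => True
  | nprop _ => True
  | var _ => True
  | and a b => noFix a ∧ noFix b
  | or a b => noFix a ∧ noFix b
  | box _ a => noFix a
  | dia _ a => noFix a
  | mu _ _ => False
  | nu _ _ => False

/-- The list of subformulas of a μ-formula. -/
def subfs : MuForm Λ → List (MuForm Λ)
  | prop p => [prop p]
  | nprop p => [nprop p]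
  | var x => [var x]
  | and a b => (and a b) :: (subfs a ++ subfs b)
  | or a b => (or a b) :: (subfs a ++ subfs b)
  | box i a => (box i a) :: subfs a
  | dia i a => (dia i a) :: subfs a
  | mu x a => (mu x a) :: subfs a
  | nu x a => (nu x a) :: subfs a

/-- Substitution of `ψ` for the free occurrences of the variable `X`. -/
def subst (X : ℕ) (ψ : MuForm Λ) : MuForm Λ → MuForm Λ
  | prop p => prop p
  | nprop p => nprop p
  | var y => if y = X then ψ else var y
  | and a b => and (subst X ψ a) (subst X ψ b)
  | or a b => or (subst X ψ a) (subst X ψ b)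
  | box i a => box i (subst X ψ a)
  | dia i a => dia i (subst X ψ a)
  | mu y a => if y = X then mu y a else mu y (subst X ψ a)
  | nu y a => if y = X then nu y a else nu y (subst X ψ a)

/-- The substitution of `ψ` for `X` is capture-free: no free variable of `ψ`
becomes bound when substituting `ψ` for the free occurrences of `X`. -/
def CaptureFree (X : ℕ) (ψ : MuForm Λ) : MuForm Λ → Prop
  | prop _ => True
  | nprop _ => True
  | var _ => True
  | and a b => CaptureFree X ψ a ∧ CaptureFree X ψ b
  | or a b => CaptureFree X ψ a ∧ CaptureFree X ψ b
  | box _ a => CaptureFree X ψ a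
  | dia _ a => CaptureFree X ψ a
  | mu y a => y = X ∨ ((X ∈ freeVars a → y ∉ freeVars ψ) ∧ CaptureFree X ψ a)
  | nu y a => y = X ∨ ((X ∈ freeVars a → y ∉ freeVars ψ) ∧ CaptureFree X ψ a)

/-- Number of occurrences of the variable `X`. -/
def varCnt (X : ℕ) : MuForm Λ → ℕ
  | prop _ => 0
  | nprop _ => 0
  | var y => if y = X then 1 else 0
  | and a b => varCnt X a + varCnt X b
  | or a b => varCnt X a + varCnt X b
  | box _ a => varCnt X a
  | dia _ a => varCnt X a
  | mu _ a => varCnt X a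
  | nu _ a => varCnt X a

/-- Number of fixed-point binders binding the variable `X`. -/
def bndCnt (X : ℕ) : MuForm Λ → ℕ
  | prop _ => 0
  | nprop _ => 0
  | var _ => 0
  | and a b => bndCnt X a + bndCnt X b
  | or a b => bndCnt X a + bndCnt X b
  | box _ a => bndCnt X a
  | dia _ a => bndCnt X a
  | mu y a => (if y = X then 1 else 0) + bndCnt X a
  | nu y a => (if y = X then 1 else 0) + bndCnt X a

end MuForm

/-- Each variable has at most one occurrence, is bound by at most one
fixed-point operator, and no variable occurs free. -/
def WellNamed {Λ : Type} (φ : MuForm Λ) : Prop :=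
  (∀ X : ℕ, MuForm.varCnt X φ ≤ 1 ∧ MuForm.bndCnt X φ ≤ 1) ∧ MuForm.freeVars φ = ∅

/- ### The alternation hierarchy Σ^μ_n / Π^μ_n -/

mutual
  /-- The class `Σ^μ_n` of the alternation hierarchy. -/
  inductive SigmaMu {Λ : Type} : ℕ → MuForm Λ → Prop where
    | base {φ : MuForm Λ} : φ.noFix → SigmaMu 0 φ
    | upS {n : ℕ} {φ : MuForm Λ} : SigmaMu n φ → SigmaMu (n + 1) φ
    | upP {n : ℕ} {φ : MuForm Λ} : PiMu n φ → SigmaMu (n + 1) φ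
    | andI {n : ℕ} {a b : MuForm Λ} :
        SigmaMu (n + 1) a → SigmaMu (n + 1) b → SigmaMu (n + 1) (MuForm.and a b)
    | orI {n : ℕ} {a b : MuForm Λ} :
        SigmaMu (n + 1) a → SigmaMu (n + 1) b → SigmaMu (n + 1) (MuForm.or a b)
    | boxI {n : ℕ} {i : Λ} {a : MuForm Λ} :
        SigmaMu (n + 1) a → SigmaMu (n + 1) (MuForm.box i a)
    | diaI {n : ℕ} {i : Λ} {a : MuForm Λ} :
        SigmaMu (n + 1) a → SigmaMu (n + 1) (MuForm.dia i a)
    | muI {n : ℕ} {X : ℕ} {a : MuForm Λ} :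
        SigmaMu (n + 1) a → SigmaMu (n + 1) (MuForm.mu X a)
    | substI {n : ℕ} {X : ℕ} {a ψ : MuForm Λ} :
        SigmaMu (n + 1) a → SigmaMu (n + 1) ψ → MuForm.CaptureFree X ψ a →
        SigmaMu (n + 1) (MuForm.subst X ψ a)

  /-- The class `Π^μ_n` of the alternation hierarchy. -/
  inductive PiMu {Λ : Type} : ℕ → MuForm Λ → Prop where
    | base {φ : MuForm Λ} : φ.noFix → PiMu 0 φ
    | upS {n : ℕ} {φ : MuForm Λ} : SigmaMu n φ → PiMu (n + 1) φ
    | upP {n : ℕ} {φ : MuForm Λ} : PiMu n φ → PiMu (n + 1) φ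
    | andI {n : ℕ} {a b : MuForm Λ} :
        PiMu (n + 1) a → PiMu (n + 1) b → PiMu (n + 1) (MuForm.and a b)
    | orI {n : ℕ} {a b : MuForm Λ} :
        PiMu (n + 1) a → PiMu (n + 1) b → PiMu (n + 1) (MuForm.or a b)
    | boxI {n : ℕ} {i : Λ} {a : MuForm Λ} :
        PiMu (n + 1) a → PiMu (n + 1) (MuForm.box i a)
    | diaI {n : ℕ} {i : Λ} {a : MuForm Λ} :
        PiMu (n + 1) a → PiMu (n + 1) (MuForm.dia i a)
    | nuI {n : ℕ} {X : ℕ} {a : MuForm Λ} :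
        PiMu (n + 1) a → PiMu (n + 1) (MuForm.nu X a)
    | substI {n : ℕ} {X : ℕ} {a ψ : MuForm Λ} :
        PiMu (n + 1) a → PiMu (n + 1) ψ → MuForm.CaptureFree X ψ a →
        PiMu (n + 1) (MuForm.subst X ψ a)
end

/- ### Kripke frames, closure conditions, fusions, equivalence -/

/-- A Kripke frame over the signature `Λ`. -/
structure Frame (Λ : Type) : Type 1 where
  World : Type
  R : Λ → World → World → Prop

/-- Frame isomorphism. -/
def FrameIso {Λ : Type} (F G : Frame Λ) : Prop :=
  ∃ e : F.World ≃ G.World, ∀ (i : Λ) (w v : F.World), F.R i w v ↔ G.R i (e w) (e v)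

/-- A class of frames is closed under isomorphic copies. -/
def ClosedUnderIso {Λ : Type} (C : Set (Frame Λ)) : Prop :=
  ∀ F ∈ C, ∀ G : Frame Λ, FrameIso F G → G ∈ C

/-- Disjoint union of a family of frames. -/
def Frame.disjUnion {Λ ι : Type} (f : ι → Frame Λ) : Frame Λ where
  World := Σ i : ι, (f i).World
  R m x y :=
    ∃ h : x.1 = y.1, (f y.1).R m (cast (congrArg (fun i => (f i).World) h) x.2) y.2

/-- A class of frames is closed under disjoint unions. -/
def ClosedUnderDU {Λ : Type} (C : Set (Frame Λ)) : Prop :=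
  ∀ (ι : Type) (f : ι → Frame Λ), (∀ i, f i ∈ C) → Frame.disjUnion f ∈ C

/-- `∘→∘` is a subframe of the class `C` of unimodal frames. -/
def HasEdge (C : Set (Frame Unit)) : Prop :=
  ∃ F ∈ C, ∃ w0 w1 : F.World, w0 ≠ w1 ∧ F.R () w0 w1

/-- `∘←∘→∘` is a subframe of the class `C` of unimodal frames. -/
def HasFork (C : Set (Frame Unit)) : Prop :=
  ∃ F ∈ C, ∃ w0 w1 w2 : F.World,
    w0 ≠ w1 ∧ w0 ≠ w2 ∧ w1 ≠ w2 ∧ F.R () w0 w1 ∧ F.R () w0 w2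

/-- `∘→∘→∘` is a subframe of the class `C` of unimodal frames. -/
def HasChain2 (C : Set (Frame Unit)) : Prop :=
  ∃ F ∈ C, ∃ w0 w1 w2 : F.World,
    w0 ≠ w1 ∧ w0 ≠ w2 ∧ w1 ≠ w2 ∧ F.R () w0 w1 ∧ F.R () w1 w2

/-- The unimodal reduct of a bimodal frame. -/
def Frame.reduct2 (F : Frame (Fin 2)) (i : Fin 2) : Frame Unit :=
  ⟨F.World, fun _ => F.R i⟩

/-- Fusion of two classes of unimodal frames (signatures `{0}` and `{1}`). -/
def fusion2 (C0 C1 : Set (Frame Unit)) : Set (Frame (Fin 2)) :=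
  {F | F.reduct2 0 ∈ C0 ∧ F.reduct2 1 ∈ C1}

/-- The unimodal reduct of a trimodal frame. -/
def Frame.reduct3 (F : Frame (Fin 3)) (i : Fin 3) : Frame Unit :=
  ⟨F.World, fun _ => F.R i⟩

/-- Fusion of three classes of unimodal frames. -/
def fusion3 (C0 C1 C2 : Set (Frame Unit)) : Set (Frame (Fin 3)) :=
  {F | F.reduct3 0 ∈ C0 ∧ F.reduct3 1 ∈ C1 ∧ F.reduct3 2 ∈ C2}

/-- Two μ-formulas are equivalent over a class of frames: they have the same
valuation in every model based on a frame of the class. -/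
def EquivOver {Λ : Type} (C : Set (Frame Λ)) (φ ψ : MuForm Λ) : Prop :=
  ∀ F ∈ C, ∀ (V : ℕ → Set F.World) (env : ℕ → Set F.World),
    MuForm.sem ⟨F.R, V⟩ env φ = MuForm.sem ⟨F.R, V⟩ env ψ

/- ### Games, strategies, evaluation games, parity games -/

/-- A two-player game on a graph: positions owned by `ownV` belong to
Verifier/∃, the others to Refuter/∀; `winV` decides infinite plays.
A player who cannot move loses. -/
structure Game (Pos : Type) where
  init : Pos
  ownV : Pos → Prop
  move : Pos → Pos → Prop
  winV : (ℕ → Pos) → Prop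

/-- The history (current position first) of an infinite play after `n` steps. -/
def histN {Pos : Type} (p : ℕ → Pos) (n : ℕ) : List Pos :=
  ((List.range (n + 1)).map p).reverse

/-- Finite histories (current position first) of plays in which the player
owning the `own`-positions follows the strategy `σ`. -/
inductive Game.Hist {Pos : Type} (G : Game Pos) (own : Pos → Prop)
    (σ : List Pos → Pos) : List Pos → Prop where
  | init : Game.Hist G own σ [G.init]
  | smove {l : List Pos} {x : Pos} : Game.Hist G own σ (x :: l) → own x →
      G.move x (σ (x :: l)) → Game.Hist G own σ (σ (x :: l) :: x :: l)
  | omove {l : List Pos} {x y : Pos} : Game.Hist G own σ (x :: l) → ¬ own x →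
      G.move x y → Game.Hist G own σ (y :: x :: l)

/-- The player owning the `own`-positions has a winning strategy:
a strategy which always provides a legal move at reachable own positions
(so the player is never stuck) and such that every infinite play following it
satisfies the winning condition `winO`; finite plays in which the opponent is
stuck are automatically won. -/
def Game.WinsFor {Pos : Type} (G : Game Pos) (own : Pos → Prop)
    (winO : (ℕ → Pos) → Prop) : Prop :=
  ∃ σ : List Pos → Pos,
    (∀ (l : List Pos) (x : Pos), G.Hist own σ (x :: l) → own x →
      G.move x (σ (x :: l))) ∧
    (∀ p : ℕ → Pos, p 0 = G.init → (∀ n, G.move (p n) (p (n + 1))) →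
      (∀ n, own (p n) → p (n + 1) = σ (histN p n)) → winO p)

/-- Verifier has a winning strategy. -/
def Game.VWins {Pos : Type} (G : Game Pos) : Prop := G.WinsFor G.ownV G.winV

/-- Refuter has a winning strategy. -/
def Game.RWins {Pos : Type} (G : Game Pos) : Prop :=
  G.WinsFor (fun x => ¬ G.ownV x) (fun p => ¬ G.winV p)

/-- Ownership of positions in the evaluation game `𝒢(M, w ⊨ φ0)`:
Verifier owns disjunctions, diamonds, μ-formulas, μ-bound variables and
false literals. -/
def evalOwnV {Λ W : Type} (M : KModel Λ W) (φ0 : MuForm Λ) :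
    MuForm Λ × W → Prop := fun q =>
  match q with
  | (.or _ _, _) => True
  | (.dia _ _, _) => True
  | (.mu _ _, _) => True
  | (.var X, _) => ∃ a : MuForm Λ, (MuForm.mu X a) ∈ φ0.subfs
  | (.prop p, w) => w ∉ M.V p
  | (.nprop p, w) => w ∈ M.V p
  | _ => False

/-- Admissible moves in the evaluation game `𝒢(M, w ⊨ φ0)`. -/
def evalMove {Λ W : Type} (M : KModel Λ W) (φ0 : MuForm Λ) :
    MuForm Λ × W → MuForm Λ × W → Prop := fun q r =>
  match q with
  | (.and a b, w) => r = (a, w) ∨ r = (b, w)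
  | (.or a b, w) => r = (a, w) ∨ r = (b, w)
  | (.box i a, w) => ∃ v, M.R i w v ∧ r = (a, v)
  | (.dia i a, w) => ∃ v, M.R i w v ∧ r = (a, v)
  | (.mu _ a, w) => r = (a, w)
  | (.nu _ a, w) => r = (a, w)
  | (.var X, w) =>
      ∃ a : MuForm Λ,
        ((MuForm.mu X a) ∈ φ0.subfs ∧ r = (MuForm.mu X a, w)) ∨
        ((MuForm.nu X a) ∈ φ0.subfs ∧ r = (MuForm.nu X a, w))
  | (.prop _, _) => False
  | (.nprop _, _) => False

/-- The formula `ψ` labels infinitely many positions of the infinite run `p`. -/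
def InfOccF {Λ W : Type} (p : ℕ → MuForm Λ × W) (ψ : MuForm Λ) : Prop :=
  ∀ n, ∃ m, n ≤ m ∧ (p m).1 = ψ

/-- Verifier wins an infinite run iff the outermost fixed-point subformula
occurring infinitely often is a ν-formula. -/
def evalWinV {Λ W : Type} (p : ℕ → MuForm Λ × W) : Prop :=
  ∃ (X : ℕ) (a : MuForm Λ), InfOccF p (MuForm.nu X a) ∧
    ∀ χ : MuForm Λ, InfOccF p χ → χ ∈ (MuForm.nu X a).subfs

/-- The evaluation game `𝒢(M, w ⊨ φ)`. -/
def evalGame {Λ W : Type} (M : KModel Λ W) (w : W) (φ : MuForm Λ) :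
    Game (MuForm Λ × W) where
  init := (φ, w)
  ownV := evalOwnV M φ
  move := evalMove M φ
  winV := evalWinV

/-- A parity game. -/
structure PGame : Type 1 where
  Pos : Type
  ownE : Pos → Prop
  init : Pos
  E : Pos → Pos → Prop
  Ω : Pos → ℕ

/-- The parity `k` occurs infinitely often in the infinite play `p`. -/
def InfOccPar (P : PGame) (p : ℕ → P.Pos) (k : ℕ) : Prop :=
  ∀ n, ∃ m, n ≤ m ∧ P.Ω (p m) = k

/-- A parity game as a game: ∃ wins an infinite play iff the greatest parity
occurring infinitely often is even. -/
def PGame.toGame (P : PGame) : Game P.Pos where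
  init := P.init
  ownV := P.ownE
  move := P.E
  winV := fun p => ∃ k, Even k ∧ InfOccPar P p k ∧ ∀ j, InfOccPar P p j → j ≤ k

/-- Player ∃ wins the parity game. -/
def PGame.ExWins (P : PGame) : Prop := P.toGame.VWins

/-- Player ∀ wins the parity game. -/
def PGame.AWins (P : PGame) : Prop := P.toGame.RWins

/-- The parity of a fixed-point formula: `2(i+ε) − 1` for a μ-formula in
`Σ^μ_{2i+ε} \ Π^μ_{2i+ε}`, `2i` for a ν-formula in `Π^μ_{2i+ε} \ Σ^μ_{2i+ε}`,
and `0` for non fixed-point formulas. -/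
noncomputable def fpParity {Λ : Type} : MuForm Λ → ℕ := fun φ =>
  match φ with
  | .mu _ _ =>
      (fun ℓ => if Even ℓ then ℓ - 1 else ℓ) (sInf {k | SigmaMu k φ ∧ ¬ PiMu k φ})
  | .nu _ _ =>
      (fun ℓ => if Even ℓ then ℓ else ℓ - 1) (sInf {k | PiMu k φ ∧ ¬ SigmaMu k φ})
  | _ => 0

/-- The evaluation game `𝒢(M, w ⊨ φ)` presented as the parity game
`𝒢^P(M, w ⊨ φ)`. -/
noncomputable def evalPGame {Λ W : Type} (M : KModel Λ W) (w : W)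
    (φ : MuForm Λ) : PGame where
  Pos := MuForm Λ × W
  ownE := evalOwnV M φ
  init := (φ, w)
  E := evalMove M φ
  Ω := fun q => fpParity q.1

/- ### Tree unfolding of a parity game -/

/-- Finite `E`-paths of a parity game starting at the initial position,
presented as (last vertex, reversed list of earlier vertices). -/
inductive IsUPath (P : PGame) : P.Pos × List P.Pos → Prop where
  | init : IsUPath P (P.init, [])
  | cons {u : P.Pos} {t : List P.Pos} {v : P.Pos} :
      IsUPath P (u, t) → P.E u v → IsUPath P (v, u :: t)

/-- The tree unfolding of a parity game: positions are the finite `E`-paths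
starting at the initial position, with ownership and parity inherited from
the last vertex. -/
def PGame.unfold (P : PGame) : PGame where
  Pos := {q : P.Pos × List P.Pos // IsUPath P q}
  ownE := fun q => P.ownE q.val.1
  init := ⟨(P.init, []), IsUPath.init⟩
  E := fun q r => r.val.2 = q.val.1 :: q.val.2 ∧ P.E q.val.1 r.val.1
  Ω := fun q => P.Ω q.val.1

/- ### The Kripke encoding of parity games and the formulas W_n -/

/- Propositional indices used for the encoding:
`bd = 0`, `pos = 1`, `pre₀ = 2`, `nxt₀ = 3`, `pre₁ = 4`, `nxt₁ = 5`,
`P_∃ = 6`, `P_∀ = 7`, `P_j = 8 + j`. -/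

/-- Worlds of the Kripke model encoding a parity game: a world `pos v` for
each position `v`, and intermediate choice/confirmation worlds `mid u u'`
for the edges. -/
inductive EncW (Pos : Type) : Type where
  | pos : Pos → EncW Pos
  | mid : Pos → Pos → EncW Pos

/-- Choice steps (`R₀`) of the encoding. -/
def encR0 (P : PGame) : EncW P.Pos → EncW P.Pos → Prop
  | EncW.pos v, EncW.mid u u' => v = u ∧ P.E u u'
  | _, _ => False

/-- Confirmation steps (`R₁`) of the encoding. -/
def encR1 (P : PGame) : EncW P.Pos → EncW P.Pos → Prop
  | EncW.mid u u', EncW.pos v => v = u' ∧ P.E u u'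
  | _, _ => False

/-- Valuation of the encoding. -/
def encV (P : PGame) : ℕ → Set (EncW P.Pos) := fun n =>
  if n = 0 then Set.univ                                         -- bd
  else if n = 1 then {x | ∃ v, x = EncW.pos v}                   -- pos
  else if n = 2 then {x | ∃ v, x = EncW.pos v}                   -- pre₀
  else if n = 3 then {x | ∃ u u', x = EncW.mid u u'}             -- nxt₀
  else if n = 4 then {x | ∃ u u', x = EncW.mid u u'}             -- pre₁
  else if n = 5 then {x | ∃ v, x = EncW.pos v}                   -- nxt₁
  else if n = 6 then {x | ∃ v, x = EncW.pos v ∧ P.ownE v}        -- P_∃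
  else if n = 7 then {x | ∃ v, x = EncW.pos v ∧ ¬ P.ownE v}      -- P_∀
  else {x | ∃ v, x = EncW.pos v ∧ P.Ω v = n - 8}                 -- P_{n-8}

/-- The bimodal Kripke model `P^K` encoding the parity game `P`. -/
def encModel (P : PGame) : KModel (Fin 2) (EncW P.Pos) where
  R := fun i => if i = 0 then encR0 P else encR1 P
  V := encV P

/-- `♦φ := νY. pre₀ ∧ bd ∧ ◇₀(nxt₀ ∧ pre₁ ∧ bd ∧ ◇₁(nxt₁ ∧ bd ∧
((Y ∧ ¬pos) ∨ (φ ∧ pos))))`. -/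
def DiamW (Y : ℕ) (φ : MuForm (Fin 2)) : MuForm (Fin 2) :=
  .nu Y (.and (.prop 2) (.and (.prop 0)
    (.dia 0 (.and (.prop 3) (.and (.prop 4) (.and (.prop 0)
      (.dia 1 (.and (.prop 5) (.and (.prop 0)
        (.or (.and (.var Y) (.nprop 1)) (.and φ (.prop 1))))))))))))

/-- `■φ := νY. (pre₀ ∧ bd → □₀(nxt₀ ∧ pre₁ ∧ bd → □₁(nxt₁ ∧ bd →
((Y ∧ ¬pos) ∧ (φ ∧ pos)))))`, implications written disjunctively. -/
def BoxW (Y : ℕ) (φ : MuForm (Fin 2)) : MuForm (Fin 2) :=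
  .nu Y (.or (.or (.nprop 2) (.nprop 0))
    (.box 0 (.or (.or (.nprop 3) (.or (.nprop 4) (.nprop 0)))
      (.box 1 (.or (.or (.nprop 5) (.nprop 0))
        (.and (.and (.var Y) (.nprop 1)) (.and φ (.prop 1))))))))

/-- The `j`-th disjunct `(P_j ∧ P_∃ ∧ ♦X_j) ∨ (P_j ∧ P_∀ ∧ ■X_j)`. -/
def WDisj (Y j : ℕ) : MuForm (Fin 2) :=
  .or (.and (.prop (8 + j)) (.and (.prop 6) (DiamW Y (.var j))))
      (.and (.prop (8 + j)) (.and (.prop 7) (BoxW Y (.var j))))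

/-- The disjunction `⋁_{0 ≤ j ≤ n} [(P_j ∧ P_∃ ∧ ♦X_j) ∨ (P_j ∧ P_∀ ∧ ■X_j)]`. -/
def WBody (Y : ℕ) : ℕ → MuForm (Fin 2)
  | 0 => WDisj Y 0
  | j + 1 => .or (WBody Y (j)) (WDisj Y (j + 1))

/-- The alternating block of binders `ηX_n … νX_2 μX_1 νX_0`
(`νX_j` for even `j`, `μX_j` for odd `j`). -/
def WBind : ℕ → MuForm (Fin 2) → MuForm (Fin 2)
  | 0, φ => .nu 0 φ
  | j + 1, φ =>
      if Even (j + 1) then .nu (j + 1) (WBind j φ) else .mu (j + 1) (WBind j φ)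

/-- The winning region formula
`W_n := ηX_n … νX_2 μX_1 νX_0. ⋁_{0≤j≤n} [(P_j ∧ P_∃ ∧ ♦X_j) ∨ (P_j ∧ P_∀ ∧ ■X_j)]`,
where the fresh variable `Y` of `♦`/`■` is `n + 1`. -/
def Wfml (n : ℕ) : MuForm (Fin 2) := WBind n (WBody (n + 1) n)

/- ### Pointed bimodal models, restriction, isomorphisms, the map f_φ -/

/-- A pointed bimodal Kripke model. -/
structure PModel : Type 1 where
  World : Type
  R0 : World → World → Prop
  R1 : World → World → Prop
  V : ℕ → Set World
  pt : World

/-- The underlying bimodal Kripke model. -/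
def PModel.toK (M : PModel) : KModel (Fin 2) M.World :=
  ⟨fun i => if i = 0 then M.R0 else M.R1, M.V⟩

/-- The edges of the graph of a pointed bimodal model. -/
def PModel.edge (M : PModel) (x y : M.World) : Prop := M.R0 x y ∨ M.R1 x y

/-- The graph of the model has no loops. -/
def PModel.Acyclic (M : PModel) : Prop :=
  ∀ x : M.World, ¬ Relation.TransGen M.edge x x

/-- Reachability in at most `k` steps. -/
def stepsLe (M : PModel) : ℕ → M.World → M.World → Prop
  | 0 => fun x y => x = y
  | k + 1 => fun x y => stepsLe M k x y ∨ ∃ u, stepsLe M k x u ∧ M.edge u y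

/-- The worlds at distance less than `n` from the distinguished point. -/
def PModel.ball (M : PModel) (n : ℕ) : Set M.World :=
  {v | ∃ k, k + 1 ≤ n ∧ stepsLe M k M.pt v}

/-- `e` is an isomorphism between the restrictions `(M↾n, w)` and `(M'↾n, w')`,
i.e. an `n`-isomorphism. -/
structure IsNIso (M M' : PModel) (n : ℕ)
    (e : {x // x ∈ M.ball n} ≃ {x // x ∈ M'.ball n}) : Prop where
  pt : ∀ hx : M.pt ∈ M.ball n, (e ⟨M.pt, hx⟩).val = M'.pt
  r0 : ∀ x y : {x // x ∈ M.ball n}, M.R0 x.val y.val ↔ M'.R0 (e x).val (e y).val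
  r1 : ∀ x y : {x // x ∈ M.ball n}, M.R1 x.val y.val ↔ M'.R1 (e x).val (e y).val
  vals : ∀ (p : ℕ) (x : {x // x ∈ M.ball n}), x.val ∈ M.V p ↔ (e x).val ∈ M'.V p

/-- The pointed models are `n`-isomorphic. -/
def NIsomorphic (M M' : PModel) (n : ℕ) : Prop := ∃ e, IsNIso M M' n e

/-- `e` is an isomorphism of pointed bimodal models. -/
structure IsIsoP (M M' : PModel) (e : M.World ≃ M'.World) : Prop where
  pt : e M.pt = M'.pt
  r0 : ∀ x y : M.World, M.R0 x y ↔ M'.R0 (e x) (e y)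
  r1 : ∀ x y : M.World, M.R1 x y ↔ M'.R1 (e x) (e y)
  vals : ∀ (p : ℕ) (x : M.World), x ∈ M.V p ↔ e x ∈ M'.V p

/-- The pointed models are isomorphic. -/
def IsomorphicP (M M' : PModel) : Prop := ∃ e, IsIsoP M M' e

/-- The map `f_φ` sending a pointed bimodal model `(M, w)` to the pointed
Kripke model `(𝒢^K(M, w ⊨ φ), ⟨φ, w⟩)` representing its evaluation game,
where `𝒢^K(M, w ⊨ φ) = (𝒢^P(M, w ⊨ φ))^K`. -/
noncomputable def fGame (φ : MuForm (Fin 2)) (M : PModel) : PModel where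
  World := EncW (MuForm (Fin 2) × M.World)
  R0 := encR0 (evalPGame M.toK M.pt φ)
  R1 := encR1 (evalPGame M.toK M.pt φ)
  V := encV (evalPGame M.toK M.pt φ)
  pt := EncW.pos (φ, M.pt)

/- ### Modal logics, fusions of logics, GLP -/

/-- Modal formulas (no fixed points) over a signature `I`, with full
implication and falsum. -/
inductive MForm (I : Type) : Type where
  | prop : ℕ → MForm I
  | fls : MForm I
  | imp : MForm I → MForm I → MForm I
  | box : I → MForm I → MForm I

namespace MForm

variable {I : Type}

def neg (a : MForm I) : MForm I := a.imp .fls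

def conj (a b : MForm I) : MForm I := (a.imp b.neg).neg

def diam (i : I) (a : MForm I) : MForm I := (MForm.box i a.neg).neg

def iff (a b : MForm I) : MForm I := conj (a.imp b) (b.imp a)

/-- Kripke semantics for modal formulas. -/
def semM {W : Type} (R : I → W → W → Prop) (V : ℕ → Set W) : MForm I → Set W
  | prop p => V p
  | fls => ∅
  | imp a b => {w | w ∈ semM R V a → w ∈ semM R V b}
  | box i a => {w | ∀ v, R i w v → v ∈ semM R V a}

/-- Uniform substitution of formulas for propositional symbols. -/
def substP (σ : ℕ → MForm I) : MForm I → MForm I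
  | prop p => σ p
  | fls => fls
  | imp a b => imp (substP σ a) (substP σ b)
  | box i a => box i (substP σ a)

/-- The formula only uses modalities from `S`. -/
def UsesOnly (S : Set I) : MForm I → Prop
  | prop _ => True
  | fls => True
  | imp a b => UsesOnly S a ∧ UsesOnly S b
  | box i a => i ∈ S ∧ UsesOnly S a

/-- The propositional symbol `x` occurs in the formula. -/
def PropOccurs (x : ℕ) : MForm I → Prop
  | prop p => p = x
  | fls => False
  | imp a b => PropOccurs x a ∨ PropOccurs x b
  | box _ a => PropOccurs x a

/-- Every occurrence of the propositional symbol `x` is within the scope of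
some modality. -/
def Guarded (x : ℕ) : MForm I → Prop
  | prop p => p ≠ x
  | fls => True
  | imp a b => Guarded x a ∧ Guarded x b
  | box _ _ => True

end MForm

/-- Propositional tautologies: formulas true under every boolean valuation
treating propositional symbols and boxed formulas as atoms. -/
def IsTaut {I : Type} (φ : MForm I) : Prop :=
  ∀ val : MForm I → Prop, ¬ val .fls →
    (∀ a b : MForm I, val (a.imp b) ↔ (val a → val b)) → val φ

/-- A modal formula is valid on a frame: it holds at every world under
every valuation. -/
def ValidOn {I : Type} (F : Frame I) (φ : MForm I) : Prop :=
  ∀ (V : ℕ → Set F.World) (w : F.World), w ∈ MForm.semM F.R V φ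

/-- `L` is a normal modal logic in the signature `S`. -/
structure IsNormalIn {I : Type} (S : Set I) (L : Set (MForm I)) : Prop where
  inSig : ∀ φ ∈ L, MForm.UsesOnly S φ
  taut : ∀ φ : MForm I, MForm.UsesOnly S φ → IsTaut φ → φ ∈ L
  axK : ∀ i ∈ S, ∀ a b : MForm I, MForm.UsesOnly S a → MForm.UsesOnly S b →
    ((MForm.box i (a.imp b)).imp ((MForm.box i a).imp (MForm.box i b))) ∈ L
  mp : ∀ a b : MForm I, a ∈ L → (a.imp b) ∈ L → b ∈ L
  nec : ∀ i ∈ S, ∀ a : MForm I, a ∈ L → MForm.box i a ∈ L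
  subst : ∀ σ : ℕ → MForm I, (∀ p, MForm.UsesOnly S (σ p)) →
    ∀ a ∈ L, a.substP σ ∈ L

/-- The fusion of a family of modal logics: the smallest normal modal logic
in the combined signature containing each of them. -/
def FusionLogic {I J : Type} (Ls : J → Set (MForm I)) : Set (MForm I) :=
  ⋂₀ {L : Set (MForm I) | IsNormalIn Set.univ L ∧ ∀ j, Ls j ⊆ L}

/-- Extension of a frame for the `j`-th component signature to the full
signature (the other relations are empty; validity of formulas in the
component signature is unaffected). -/
def extendFrame {I J : Type} (c : I → J) (j : J)
    (F : Frame {i : I // c i = j}) : Frame I :=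
  ⟨F.World, fun i w v => ∃ h : c i = j, F.R ⟨i, h⟩ w v⟩

/-- The reduct of a frame for the full signature to the `j`-th component. -/
def Frame.reductTo {I J : Type} (c : I → J) (j : J) (F : Frame I) :
    Frame {i : I // c i = j} :=
  ⟨F.World, fun i => F.R i.val⟩

/-- `L` is characterized by the class `Fs` of frames in the `j`-th component
signature: `L` consists exactly of the formulas of that signature valid on
every frame of `Fs`. -/
def CharacterizedBy {I J : Type} (c : I → J) (j : J) (L : Set (MForm I))
    (Fs : Set (Frame {i : I // c i = j})) : Prop :=
  L = {φ | MForm.UsesOnly {i | c i = j} φ ∧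
        ∀ F ∈ Fs, ValidOn (extendFrame c j F) φ}

/-- The fusion of classes of frames in pairwise disjoint signatures. -/
def FusionFrames {I J : Type} (c : I → J)
    (Fs : ∀ j : J, Set (Frame {i : I // c i = j})) : Set (Frame I) :=
  {F | ∀ j, F.reductTo c j ∈ Fs j}

/-- The finite model property for a logic in signature `S`. -/
def HasFMP {I : Type} (S : Set I) (L : Set (MForm I)) : Prop :=
  ∀ φ : MForm I, MForm.UsesOnly S φ → φ ∉ L →
    ∃ (W : Type) (_ : Finite W) (R : I → W → W → Prop) (V : ℕ → Set W),
      (∀ ψ ∈ L, ∀ w : W, w ∈ MForm.semM R V ψ) ∧ ∃ w : W, w ∉ MForm.semM R V φ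

/-- The provability logic `GLP` (signature `ℕ`). -/
inductive GLPthm : MForm ℕ → Prop where
  | taut {φ : MForm ℕ} : IsTaut φ → GLPthm φ
  | axK (n : ℕ) (a b : MForm ℕ) :
      GLPthm ((MForm.box n (a.imp b)).imp ((MForm.box n a).imp (MForm.box n b)))
  | axLob (n : ℕ) (a : MForm ℕ) :
      GLPthm ((MForm.box n ((MForm.box n a).imp a)).imp (MForm.box n a))
  | axMono {m n : ℕ} (h : m ≤ n) (a : MForm ℕ) :
      GLPthm ((MForm.box m a).imp (MForm.box n a))
  | axStab {m n : ℕ} (h : m ≤ n) (a : MForm ℕ) :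
      GLPthm ((MForm.box m a).imp (MForm.box n (MForm.box m a)))
  | axStabD {m n : ℕ} (h : m ≤ n) (a : MForm ℕ) :
      GLPthm ((MForm.diam m a).imp (MForm.box n (MForm.diam m a)))
  | mp {a b : MForm ℕ} : GLPthm (a.imp b) → GLPthm a → GLPthm b
  | nec (n : ℕ) {a : MForm ℕ} : GLPthm a → GLPthm (MForm.box n a)
  | subst (σ : ℕ → MForm ℕ) {a : MForm ℕ} : GLPthm a → GLPthm (a.substP σ)

/- ### Frame classes for the standard modal logics -/

def FK : Set (Frame Unit) := Set.univ
def FK4 : Set (Frame Unit) := {F | Transitive (F.R ())}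
def FS4 : Set (Frame Unit) := {F | Reflexive (F.R ()) ∧ Transitive (F.R ())}
def FKD45 : Set (Frame Unit) :=
  {F | (∀ w, ∃ v, F.R () w v) ∧ Transitive (F.R ()) ∧
    (∀ w v u, F.R () w v → F.R () w u → F.R () v u)}
def FS5 : Set (Frame Unit) := {F | Equivalence (F.R ())}
def FGL : Set (Frame Unit) :=
  {F | Transitive (F.R ()) ∧ ¬ ∃ f : ℕ → F.World, ∀ k, F.R () (f k) (f (k + 1))}

namespace FFMP
open MForm
variable {I W : Type}

theorem semM_fls (R : I → W → W → Prop) (V : ℕ → Set W) : semM R V (.fls) = (∅ : Set W) := rfl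

theorem mem_semM_imp {R : I → W → W → Prop} {V : ℕ → Set W} {a b : MForm I} {w : W} :
    w ∈ semM R V (a.imp b) ↔ (w ∈ semM R V a → w ∈ semM R V b) := Iff.rfl

theorem mem_semM_box {R : I → W → W → Prop} {V : ℕ → Set W} {i : I} {a : MForm I} {w : W} :
    w ∈ semM R V (box i a) ↔ ∀ v, R i w v → v ∈ semM R V a := Iff.rfl

theorem mem_semM_neg {R : I → W → W → Prop} {V : ℕ → Set W} {a : MForm I} {w : W} :
    w ∈ semM R V (neg a) ↔ w ∉ semM R V a := by
  constructor
  · intro h ha; exact (h ha : w ∈ (∅ : Set W))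
  · intro h ha; exact absurd ha h

theorem mem_semM_conj {R : I → W → W → Prop} {V : ℕ → Set W} {a b : MForm I} {w : W} :
    w ∈ semM R V (conj a b) ↔ (w ∈ semM R V a ∧ w ∈ semM R V b) := by
  rw [conj, mem_semM_neg, mem_semM_imp, mem_semM_neg]; tauto

def bigConj : List (MForm I) → MForm I
  | [] => neg .fls
  | a :: t => conj a (bigConj t)

def bigDisj : List (MForm I) → MForm I
  | [] => .fls
  | a :: t => (neg a).imp (bigDisj t)

theorem mem_semM_bigConj {R : I → W → W → Prop} {V : ℕ → Set W} {l : List (MForm I)} {w : W} :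
    w ∈ semM R V (bigConj l) ↔ ∀ a ∈ l, w ∈ semM R V a := by
  induction l with
  | nil => simp [bigConj, mem_semM_neg, semM_fls]
  | cons a t ih => simp [bigConj, mem_semM_conj, ih]

theorem mem_semM_bigDisj {R : I → W → W → Prop} {V : ℕ → Set W} {l : List (MForm I)} {w : W} :
    w ∈ semM R V (bigDisj l) ↔ ∃ a ∈ l, w ∈ semM R V a := by
  induction l with
  | nil => simp [bigDisj, semM_fls]
  | cons a t ih =>
    simp only [bigDisj, mem_semM_imp, mem_semM_neg, ih, List.mem_cons]
    constructor
    · intro h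
      by_cases ha : w ∈ semM R V a
      · exact ⟨a, Or.inl rfl, ha⟩
      · obtain ⟨b, hb, hwb⟩ := h ha; exact ⟨b, Or.inr hb, hwb⟩
    · rintro ⟨b, (rfl | hb), hwb⟩
      · intro h; exact absurd hwb h
      · exact fun _ => ⟨b, hb, hwb⟩

theorem usesOnly_mono {S T : Set I} (h : S ⊆ T) : ∀ {φ : MForm I}, UsesOnly S φ → UsesOnly T φ
  | .prop _, _ => trivial
  | .fls, _ => trivial
  | .imp a b, hu => ⟨usesOnly_mono h hu.1, usesOnly_mono h hu.2⟩
  | .box i a, hu => ⟨h hu.1, usesOnly_mono h hu.2⟩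

theorem usesOnly_univ : ∀ φ : MForm I, UsesOnly Set.univ φ
  | .prop _ => trivial
  | .fls => trivial
  | .imp a b => ⟨usesOnly_univ a, usesOnly_univ b⟩
  | .box _ a => ⟨trivial, usesOnly_univ a⟩

theorem usesOnly_neg {S : Set I} {a : MForm I} (h : UsesOnly S a) : UsesOnly S (neg a) :=
  ⟨h, trivial⟩

theorem usesOnly_conj {S : Set I} {a b : MForm I} (ha : UsesOnly S a) (hb : UsesOnly S b) :
    UsesOnly S (conj a b) := ⟨⟨ha, usesOnly_neg hb⟩, trivial⟩

theorem usesOnly_bigConj {S : Set I} {l : List (MForm I)} (h : ∀ a ∈ l, UsesOnly S a) :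
    UsesOnly S (bigConj l) := by
  induction l with
  | nil => exact ⟨trivial, trivial⟩
  | cons a t ih =>
    exact usesOnly_conj (h a (List.mem_cons_self)) (ih fun b hb => h b (List.mem_cons_of_mem a hb))

section Val
variable (val : MForm I → Prop) (hf : ¬ val .fls)
  (hi : ∀ a b : MForm I, val (a.imp b) ↔ (val a → val b))

include hf hi in
theorem val_neg (a : MForm I) : val (neg a) ↔ ¬ val a := by
  rw [neg, hi]; tauto

include hf hi in
theorem val_conj (a b : MForm I) : val (conj a b) ↔ (val a ∧ val b) := by
  rw [conj, val_neg val hf hi, hi, val_neg val hf hi]; tauto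

include hf hi in
theorem val_bigConj (l : List (MForm I)) : val (bigConj l) ↔ ∀ a ∈ l, val a := by
  induction l with
  | nil => simp [bigConj, val_neg val hf hi]; exact hf
  | cons a t ih => simp [bigConj, val_conj val hf hi, ih]

end Val

theorem isTaut_semM {R : I → W → W → Prop} {V : ℕ → Set W} {φ : MForm I} (h : IsTaut φ)
    (w : W) : w ∈ semM R V φ := by
  refine h (fun ψ => w ∈ semM R V ψ) (fun hx => hx) (fun a b => Iff.rfl)

theorem substP_semM (R : I → W → W → Prop) (V : ℕ → Set W) (σ : ℕ → MForm I) :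
    ∀ (φ : MForm I) (w : W),
      w ∈ semM R V (φ.substP σ) ↔ w ∈ semM R (fun p => semM R V (σ p)) φ
  | .prop p, w => Iff.rfl
  | .fls, w => Iff.rfl
  | .imp a b, w => by
    rw [substP, mem_semM_imp, mem_semM_imp, substP_semM R V σ a w, substP_semM R V σ b w]
  | .box i a, w => by
    rw [substP, mem_semM_box, mem_semM_box]
    exact forall_congr' fun v => imp_congr Iff.rfl (substP_semM R V σ a v)

theorem isTaut_substP {φ : MForm I} (h : IsTaut φ) (σ : ℕ → MForm I) : IsTaut (φ.substP σ) := by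
  intro val hf hi
  exact h (fun ψ => val (ψ.substP σ)) hf (fun a b => hi _ _)

/-- Master transfer lemma along a relation-preserving embedding. -/
theorem sem_embed {W₁ W₂ : Type} {R₁ : I → W₁ → W₁ → Prop} {V₁ : ℕ → Set W₁}
    {R₂ : I → W₂ → W₂ → Prop} {V₂ : ℕ → Set W₂} {g : W₁ → W₂} {S : Set I}
    (hR₁ : ∀ i ∈ S, ∀ x y, R₁ i x y → R₂ i (g x) (g y))
    (hR₂ : ∀ i ∈ S, ∀ x y₂, R₂ i (g x) y₂ → ∃ y, R₁ i x y ∧ g y = y₂)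
    (hV : ∀ p x, x ∈ V₁ p ↔ g x ∈ V₂ p) :
    ∀ (φ : MForm I), UsesOnly S φ → ∀ x, x ∈ semM R₁ V₁ φ ↔ g x ∈ semM R₂ V₂ φ
  | .prop p, _, x => hV p x
  | .fls, _, x => Iff.rfl
  | .imp a b, hu, x => by
    rw [mem_semM_imp, mem_semM_imp, sem_embed hR₁ hR₂ hV a hu.1 x,
      sem_embed hR₁ hR₂ hV b hu.2 x]
  | .box i a, hu, x => by
    rw [mem_semM_box, mem_semM_box]
    constructor
    · intro h v₂ hv₂
      obtain ⟨y, hy, rfl⟩ := hR₂ i hu.1 x v₂ hv₂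
      exact (sem_embed hR₁ hR₂ hV a hu.2 y).1 (h y hy)
    · intro h y hy
      exact (sem_embed hR₁ hR₂ hV a hu.2 y).2 (h (g y) (hR₁ i hu.1 x y hy))

end FFMP
namespace FFMP
open MForm
theorem usesOnly_bigDisj {I : Type} {S : Set I} {l : List (MForm I)}
    (h : ∀ a ∈ l, UsesOnly S a) : UsesOnly S (bigDisj l) := by
  induction l with
  | nil => trivial
  | cons a t ih =>
    exact ⟨usesOnly_neg (h a (List.mem_cons_self)),
      ih fun b hb => h b (List.mem_cons_of_mem a hb)⟩
end FFMP
namespace FFMP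
open MForm
variable {I : Type} {J : Type} {Ls : J → Set (MForm I)}

theorem mem_fusion {φ : MForm I} :
    φ ∈ FusionLogic Ls ↔ ∀ L : Set (MForm I), IsNormalIn Set.univ L → (∀ j, Ls j ⊆ L) → φ ∈ L := by
  simp [FusionLogic, Set.mem_sInter, Set.mem_setOf_eq, and_imp]

theorem F_taut {φ : MForm I} (h : IsTaut φ) : φ ∈ FusionLogic Ls :=
  mem_fusion.2 fun _ hL _ => hL.taut φ (usesOnly_univ φ) h

theorem F_mp {a b : MForm I} (ha : a ∈ FusionLogic Ls) (hab : a.imp b ∈ FusionLogic Ls) :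
    b ∈ FusionLogic Ls :=
  mem_fusion.2 fun L hL hs => hL.mp a b (mem_fusion.1 ha L hL hs) (mem_fusion.1 hab L hL hs)

theorem F_nec (i : I) {a : MForm I} (ha : a ∈ FusionLogic Ls) : box i a ∈ FusionLogic Ls :=
  mem_fusion.2 fun L hL hs => hL.nec i trivial a (mem_fusion.1 ha L hL hs)

theorem F_substP (σ : ℕ → MForm I) {a : MForm I} (ha : a ∈ FusionLogic Ls) :
    a.substP σ ∈ FusionLogic Ls :=
  mem_fusion.2 fun L hL hs =>
    hL.subst σ (fun p => usesOnly_univ (σ p)) a (mem_fusion.1 ha L hL hs)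

theorem F_sub (j : J) : Ls j ⊆ FusionLogic Ls := fun _ ha =>
  mem_fusion.2 fun _ _ hs => hs j ha

theorem F_conj {a b : MForm I} (ha : a ∈ FusionLogic Ls) (hb : b ∈ FusionLogic Ls) :
    conj a b ∈ FusionLogic Ls := by
  have ht : IsTaut (a.imp (b.imp (conj a b))) := by
    intro val hf hi
    rw [hi, hi]
    intro hva hvb
    rw [val_conj val hf hi]
    exact ⟨hva, hvb⟩
  exact F_mp hb (F_mp ha (F_taut ht))

theorem F_bigConj {l : List (MForm I)} (h : ∀ a ∈ l, a ∈ FusionLogic Ls) :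
    bigConj l ∈ FusionLogic Ls := by
  induction l with
  | nil =>
    refine F_taut ?_
    intro val hf hi
    show val (neg .fls)
    rw [val_neg val hf hi]; exact hf
  | cons a t ih =>
    exact F_conj (h a (List.mem_cons_self)) (ih fun b hb => h b (List.mem_cons_of_mem a hb))

/-- From `¬(A ∧ B) ∈ F` and `B ∈ F` conclude `¬A ∈ F`. -/
theorem F_neg_left {a b : MForm I} (hab : neg (conj a b) ∈ FusionLogic Ls)
    (hb : b ∈ FusionLogic Ls) : neg a ∈ FusionLogic Ls := by
  have ht : IsTaut ((neg (conj a b)).imp (b.imp (neg a))) := by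
    intro val hf hi
    rw [hi, hi, val_neg val hf hi, val_neg val hf hi, val_conj val hf hi]
    tauto
  exact F_mp hb (F_mp hab (F_taut ht))

theorem F_fls_all {φ : MForm I} (h : (MForm.fls : MForm I) ∈ FusionLogic Ls) :
    φ ∈ FusionLogic Ls := by
  refine F_mp h (F_taut ?_)
  intro val hf hi
  rw [hi]; intro h0; exact absurd h0 hf

end FFMP
namespace FFMP
open MForm Classical
variable {I : Type}

theorem usesOnly_substP {S : Set I} {σ : ℕ → MForm I} (hσ : ∀ p, UsesOnly S (σ p)) :
    ∀ {a : MForm I}, UsesOnly S a → UsesOnly S (a.substP σ)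
  | .prop p, _ => hσ p
  | .fls, _ => trivial
  | .imp a b, hu => ⟨usesOnly_substP hσ hu.1, usesOnly_substP hσ hu.2⟩
  | .box i a, hu => ⟨hu.1, usesOnly_substP hσ hu.2⟩

/-- Finite-frame fmp from finite-model fmp, for a normal logic. -/
theorem frame_fmp {S : Set I} {L : Set (MForm I)} (hn : IsNormalIn S L) (hf : HasFMP S L)
    {χ : MForm I} (hχs : UsesOnly S χ) (hχ : χ ∉ L) :
    ∃ (W : Type) (_ : Fintype W) (R : I → W → W → Prop) (U : ℕ → Set W) (w₀ : W),
      (∀ i, i ∉ S → ∀ x y, ¬ R i x y) ∧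
      (∀ ψ ∈ L, ∀ V : ℕ → Set W, ∀ w, w ∈ semM R V ψ) ∧
      w₀ ∉ semM R U χ := by
  obtain ⟨W₀, hW₀fin, R₀, V₀, hglob, w₀, hw₀⟩ := hf χ hχs hχ
  haveI : Finite W₀ := hW₀fin
  haveI : Fintype W₀ := Fintype.ofFinite _
  classical
  set E : W₀ → W₀ → Prop := fun x y =>
    ∀ ψ : MForm I, UsesOnly S ψ → (x ∈ semM R₀ V₀ ψ ↔ y ∈ semM R₀ V₀ ψ) with hE_def
  have hErefl : ∀ x, E x x := fun x ψ _ => Iff.rfl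
  have hEsymm : ∀ {x y}, E x y → E y x := fun h ψ hu => (h ψ hu).symm
  have hEtrans : ∀ {x y z}, E x y → E y z → E x z := fun h1 h2 ψ hu => (h1 ψ hu).trans (h2 ψ hu)
  let s : Setoid W₀ := ⟨E, ⟨hErefl, hEsymm, hEtrans⟩⟩
  let W := Quotient s
  haveI : Finite W := Finite.of_surjective (Quotient.mk s) Quotient.mk_surjective
  haveI : Fintype W := Fintype.ofFinite _
  set R : I → W → W → Prop := fun i a b =>
    i ∈ S ∧ ∃ x y, (⟦x⟧ : W) = a ∧ (⟦y⟧ : W) = b ∧ R₀ i x y with hR_def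
  set U : ℕ → Set W := fun p => {a | ∃ x, (⟦x⟧ : W) = a ∧ x ∈ V₀ p} with hU_def
  -- separating formulas
  have hsepex : ∀ x y : W₀, ∃ ψ : MForm I, UsesOnly S ψ ∧
      (¬ E x y → (x ∈ semM R₀ V₀ ψ ∧ y ∉ semM R₀ V₀ ψ)) := by
    intro x y
    by_cases hxy : E x y
    · exact ⟨.fls, trivial, fun h => absurd hxy h⟩
    · rw [hE_def] at hxy
      rcases not_forall.1 hxy with ⟨ψ, hψ⟩
      rcases Classical.not_imp.1 hψ with ⟨hu, hniff⟩
      by_cases hx : x ∈ semM R₀ V₀ ψ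
      · have hy : y ∉ semM R₀ V₀ ψ := fun hy => hniff ⟨fun _ => hy, fun _ => hx⟩
        exact ⟨ψ, hu, fun _ => ⟨hx, hy⟩⟩
      · have hy : y ∈ semM R₀ V₀ ψ := by
          by_contra hy
          exact hniff ⟨fun h => absurd h hx, fun h => absurd h hy⟩
        refine ⟨neg ψ, usesOnly_neg hu, fun _ => ?_⟩
        rw [mem_semM_neg, mem_semM_neg]
        exact ⟨hx, fun h => h hy⟩
  choose sep hsepU hsepP using hsepex
  set δ : W₀ → MForm I := fun x =>
    bigConj ((Finset.univ.toList).map (fun y => if E x y then neg .fls else sep x y)) with hδ_def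
  have hδU : ∀ x, UsesOnly S (δ x) := by
    intro x
    refine usesOnly_bigConj ?_
    intro a ha
    rw [List.mem_map] at ha
    obtain ⟨y, _, rfl⟩ := ha
    split_ifs
    · exact usesOnly_neg trivial
    · exact hsepU x y
  have hδ1 : ∀ x z : W₀, z ∈ semM R₀ V₀ (δ x) ↔ E x z := by
    intro x z
    constructor
    · intro h
      by_contra hxz
      have hz := mem_semM_bigConj.1 h (if E x z then neg .fls else sep x z) ?_
      · rw [if_neg hxz] at hz
        exact (hsepP x z hxz).2 hz
      · exact List.mem_map.2 ⟨z, Finset.mem_toList.2 (Finset.mem_univ z), rfl⟩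
    · intro hxz
      refine mem_semM_bigConj.2 ?_
      intro a ha
      rw [List.mem_map] at ha
      obtain ⟨y, _, rfl⟩ := ha
      split_ifs with hxy
      · rw [mem_semM_neg]; exact fun h => h
      · exact (hxz (sep x y) (hsepU x y)).1 (hsepP x y hxy).1
  set θ : Set W → MForm I := fun A =>
    bigDisj ((Finset.univ.toList).map (fun x => if (⟦x⟧ : W) ∈ A then δ x else .fls)) with hθ_def
  have hθU : ∀ A, UsesOnly S (θ A) := by
    intro A
    simp only [hθ_def]
    refine usesOnly_bigDisj ?_
    intro a ha
    rw [List.mem_map] at ha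
    obtain ⟨y, _, rfl⟩ := ha
    split_ifs
    · exact hδU y
    · trivial
  have hθ : ∀ (A : Set W) (z : W₀), z ∈ semM R₀ V₀ (θ A) ↔ (⟦z⟧ : W) ∈ A := by
    intro A z
    constructor
    · intro h
      obtain ⟨a, ha, hz⟩ := mem_semM_bigDisj.1 h
      rw [List.mem_map] at ha
      obtain ⟨x, _, rfl⟩ := ha
      split_ifs at hz with hxA
      · have : E x z := (hδ1 x z).1 hz
        have : (⟦x⟧ : W) = ⟦z⟧ := Quotient.sound this
        rwa [this] at hxA
      · exact absurd hz (fun h => h)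
    · intro h
      refine mem_semM_bigDisj.2 ⟨if (⟦z⟧ : W) ∈ A then δ z else .fls, ?_, ?_⟩
      · exact List.mem_map.2 ⟨z, Finset.mem_toList.2 (Finset.mem_univ z), rfl⟩
      · rw [if_pos h]
        exact (hδ1 z z).2 (hErefl z)
  -- main induction for validity
  have hmain : ∀ ψ : MForm I, UsesOnly S ψ → ∀ (V' : ℕ → Set W) (x : W₀),
      ((⟦x⟧ : W) ∈ semM R V' ψ ↔ x ∈ semM R₀ V₀ (ψ.substP (fun p => θ (V' p)))) := by
    intro ψ
    induction ψ with
    | prop p => intro _ V' x; exact (hθ (V' p) x).symm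
    | fls => intro _ V' x; exact Iff.rfl
    | imp a b iha ihb =>
      intro hu V' x
      rw [substP, mem_semM_imp, mem_semM_imp, iha hu.1 V' x, ihb hu.2 V' x]
    | box i a iha =>
      intro hu V' x
      rw [substP, mem_semM_box, mem_semM_box]
      constructor
      · intro h y hy
        have : R i ⟦x⟧ ⟦y⟧ := ⟨hu.1, x, y, rfl, rfl, hy⟩
        exact (iha hu.2 V' y).1 (h _ this)
      · intro h b hb
        obtain ⟨hiS, x', y', hx', hy', hR'⟩ := hb
        have hExx : E x' x := Quotient.exact hx'
        have hbox : x' ∈ semM R₀ V₀ (box i (a.substP (fun p => θ (V' p)))) := by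
          have husb : UsesOnly S (box i (a.substP (fun p => θ (V' p)))) :=
            ⟨hu.1, usesOnly_substP (fun p => hθU (V' p)) hu.2⟩
          exact (hExx _ husb).2 h
        have := hbox y' hR'
        rw [← hy']
        exact (iha hu.2 V' y').2 this
  have hvalid : ∀ ψ ∈ L, ∀ (V' : ℕ → Set W) (w : W), w ∈ semM R V' ψ := by
    intro ψ hψ V' w
    obtain ⟨x, rfl⟩ := Quotient.exists_rep w
    rw [hmain ψ (hn.inSig ψ hψ) V' x]
    refine hglob _ ?_ x
    exact hn.subst _ (fun p => hθU (V' p)) ψ hψ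
  -- refutation transfer
  have hmain2 : ∀ ψ : MForm I, UsesOnly S ψ → ∀ x : W₀,
      ((⟦x⟧ : W) ∈ semM R U ψ ↔ x ∈ semM R₀ V₀ ψ) := by
    intro ψ
    induction ψ with
    | prop p =>
      intro _ x
      constructor
      · rintro ⟨x', hx', hmem⟩
        exact (Quotient.exact hx' (.prop p) trivial).1 hmem
      · intro h; exact ⟨x, rfl, h⟩
    | fls => intro _ x; exact Iff.rfl
    | imp a b iha ihb =>
      intro hu x
      rw [mem_semM_imp, mem_semM_imp, iha hu.1 x, ihb hu.2 x]
    | box i a iha =>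
      intro hu x
      rw [mem_semM_box, mem_semM_box]
      constructor
      · intro h y hy
        exact (iha hu.2 y).1 (h _ ⟨hu.1, x, y, rfl, rfl, hy⟩)
      · intro h b hb
        obtain ⟨hiS, x', y', hx', hy', hR'⟩ := hb
        have hExx : E x' x := Quotient.exact hx'
        have hbox : x' ∈ semM R₀ V₀ (box i a) := (hExx _ hu).2 h
        rw [← hy']
        exact (iha hu.2 y').2 (hbox y' hR')
  refine ⟨W, inferInstance, R, U, ⟦w₀⟧, ?_, hvalid, ?_⟩
  · intro i hiS x y h; exact hiS h.1
  · intro h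
    exact hw₀ ((hmain2 χ hχs w₀).1 h)
end FFMP
namespace FFMP
open MForm
variable {I : Type}

/-- A finite Kripke component carried on `ℕ`. -/
structure NComp (I : Type) where
  size : ℕ
  rt : ℕ
  R : I → ℕ → ℕ → Prop
  U : ℕ → Set ℕ

def NComp.Good (C : NComp I) (S : Set I) (L : Set (MForm I)) : Prop :=
  C.rt < C.size ∧
  (∀ i x y, C.R i x y → x < C.size ∧ y < C.size) ∧
  (∀ i, i ∉ S → ∀ x y, ¬ C.R i x y) ∧
  (∀ ψ ∈ L, ∀ V : ℕ → Set ℕ, ∀ w, w < C.size → w ∈ semM C.R V ψ)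

theorem ncomp_realize {S : Set I} {L : Set (MForm I)} (hn : IsNormalIn S L) (hf : HasFMP S L)
    {α : MForm I} (hαs : UsesOnly S α) (hcons : neg α ∉ L) :
    ∃ C : NComp I, C.Good S L ∧ C.rt ∈ semM C.R C.U α := by
  obtain ⟨W, hfin, R, U, w₀, hempty, hvalid, hw₀⟩ := frame_fmp hn hf (usesOnly_neg hαs) hcons
  have hα : w₀ ∈ semM R U α := by
    by_contra h; exact hw₀ (mem_semM_neg.2 h)
  haveI := hfin
  set N := Fintype.card W with hN
  set e : W ≃ Fin N := Fintype.equivFin W with he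
  set g : W → ℕ := fun x => (e x : ℕ) with hg
  have hginj : Function.Injective g := fun a b h => e.injective (Fin.ext h)
  set R' : I → ℕ → ℕ → Prop := fun i a b => ∃ x y, g x = a ∧ g y = b ∧ R i x y with hR'
  set U' : ℕ → Set ℕ := fun p => {a | ∃ x, g x = a ∧ x ∈ U p} with hU'
  have hemb : ∀ (V2 : ℕ → Set ℕ) (φ : MForm I) (x : W),
      x ∈ semM R (fun p => {z | g z ∈ V2 p}) φ ↔ g x ∈ semM R' V2 φ := by
    intro V2 φ x
    refine sem_embed (S := Set.univ) ?_ ?_ ?_ φ (usesOnly_univ φ) x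
    · intro i _ x y h; exact ⟨x, y, rfl, rfl, h⟩
    · rintro i _ x y₂ ⟨x', y', hx, hy, hr⟩
      obtain rfl := hginj hx
      exact ⟨y', hr, hy⟩
    · intro p x; exact Iff.rfl
  refine ⟨⟨N, g w₀, R', U'⟩, ⟨?_, ?_, ?_, ?_⟩, ?_⟩
  · exact (e w₀).2
  · rintro i x y ⟨x', y', rfl, rfl, _⟩
    exact ⟨(e x').2, (e y').2⟩
  · rintro i hiS x y ⟨x', y', _, _, hr⟩
    exact hempty i hiS x' y' hr
  · intro ψ hψ V2 w hw
    have : w = g (e.symm ⟨w, hw⟩) := by simp [hg]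
    rw [this, ← hemb V2 ψ]
    exact hvalid ψ hψ _ _
  · show g w₀ ∈ semM R' U' α
    rw [← hemb U' α w₀]
    have : ∀ (φ : MForm I) (x : W),
        x ∈ semM R U φ ↔ x ∈ semM R (fun p => {z | g z ∈ U' p}) φ := by
      intro φ x
      refine sem_embed (S := Set.univ) (g := id) ?_ ?_ ?_ φ (usesOnly_univ φ) x
      · intro i _ x y h; exact h
      · intro i _ x y₂ h; exact ⟨y₂, h, rfl⟩
      · intro p x
        constructor
        · intro h; exact ⟨x, rfl, h⟩
        · rintro ⟨x', hx, hmem⟩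
          obtain rfl := hginj hx
          exact hmem
    rw [← this α w₀]
    exact hα

end FFMP
namespace FFMP
open MForm Classical
variable {I : Type}

/-- Subformula list for modal formulas. -/
def subfsM : MForm I → List (MForm I)
  | .prop p => [.prop p]
  | .fls => [.fls]
  | .imp a b => .imp a b :: (subfsM a ++ subfsM b)
  | .box i a => .box i a :: subfsM a

theorem self_mem_subfsM : ∀ φ : MForm I, φ ∈ subfsM φ
  | .prop _ => List.mem_singleton.2 rfl
  | .fls => List.mem_singleton.2 rfl
  | .imp _ _ => List.mem_cons_self
  | .box _ _ => List.mem_cons_self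

theorem subfsM_trans : ∀ {χ ψ : MForm I}, ψ ∈ subfsM χ → subfsM ψ ⊆ subfsM χ := by
  intro χ
  induction χ with
  | prop p => intro ψ h; simp only [subfsM, List.mem_singleton] at h; subst h; exact fun _ h => h
  | fls => intro ψ h; simp only [subfsM, List.mem_singleton] at h; subst h; exact fun _ h => h
  | imp a b iha ihb =>
    intro ψ h
    rw [subfsM, List.mem_cons] at h
    rcases h with rfl | h
    · exact fun _ h => h
    · rw [List.mem_append] at h
      rcases h with h | h
      · exact fun x hx => List.mem_cons_of_mem _ (List.mem_append.2 (Or.inl (iha h hx)))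
      · exact fun x hx => List.mem_cons_of_mem _ (List.mem_append.2 (Or.inr (ihb h hx)))
  | box i a iha =>
    intro ψ h
    rw [subfsM, List.mem_cons] at h
    rcases h with rfl | h
    · exact fun _ h => h
    · exact fun x hx => List.mem_cons_of_mem _ (iha h hx)

theorem imp_left_mem {χ a b : MForm I} (h : MForm.imp a b ∈ subfsM χ) : a ∈ subfsM χ :=
  subfsM_trans h (List.mem_cons_of_mem _ (List.mem_append.2 (Or.inl (self_mem_subfsM a))))

theorem imp_right_mem {χ a b : MForm I} (h : MForm.imp a b ∈ subfsM χ) : b ∈ subfsM χ :=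
  subfsM_trans h (List.mem_cons_of_mem _ (List.mem_append.2 (Or.inr (self_mem_subfsM b))))

theorem box_arg_mem {χ : MForm I} {i : I} {a : MForm I} (h : MForm.box i a ∈ subfsM χ) :
    a ∈ subfsM χ :=
  subfsM_trans h (List.mem_cons_of_mem _ (self_mem_subfsM a))

/-- Modal depth. -/
def depthM : MForm I → ℕ
  | .prop _ => 0
  | .fls => 0
  | .imp a b => max (depthM a) (depthM b)
  | .box _ a => depthM a + 1

def propsOf : MForm I → List ℕ
  | .prop p => [p]
  | .fls => []
  | .imp a b => propsOf a ++ propsOf b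
  | .box _ a => propsOf a

def modsOf : MForm I → List I
  | .prop _ => []
  | .fls => []
  | .imp a b => modsOf a ++ modsOf b
  | .box i a => i :: modsOf a

theorem mem_propsOf : ∀ {χ : MForm I} {p : ℕ}, MForm.prop p ∈ subfsM χ → p ∈ propsOf χ := by
  intro χ
  induction χ with
  | prop q =>
    intro p h; simp only [subfsM, List.mem_singleton] at h
    cases h; exact List.mem_singleton.2 rfl
  | fls => intro p h; simp only [subfsM, List.mem_singleton] at h; cases h
  | imp a b iha ihb =>
    intro p h
    rcases List.mem_cons.1 h with h | h
    · cases h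
    · rcases List.mem_append.1 h with h | h
      · exact List.mem_append.2 (Or.inl (iha h))
      · exact List.mem_append.2 (Or.inr (ihb h))
  | box i a iha =>
    intro p h
    rcases List.mem_cons.1 h with h | h
    · cases h
    · exact iha h

theorem mem_modsOf : ∀ {χ : MForm I} {i : I} {a : MForm I}, MForm.box i a ∈ subfsM χ → i ∈ modsOf χ := by
  intro χ
  induction χ with
  | prop q => intro i a h; simp only [subfsM, List.mem_singleton] at h; cases h
  | fls => intro i a h; simp only [subfsM, List.mem_singleton] at h; cases h
  | imp x y iha ihb =>
    intro i a h
    rcases List.mem_cons.1 h with h | h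
    · cases h
    · rcases List.mem_append.1 h with h | h
      · exact List.mem_append.2 (Or.inl (iha h))
      · exact List.mem_append.2 (Or.inr (ihb h))
  | box j x iha =>
    intro i a h
    rcases List.mem_cons.1 h with h | h
    · injection h with h1 h2; subst h1; exact List.mem_cons_self
    · exact List.mem_cons_of_mem _ (iha h)

/-- positional index in a list (classical). -/
noncomputable def idxOfL : List (MForm I) → MForm I → ℕ
  | [], _ => 0
  | a :: t, b => if a = b then 0 else idxOfL t b + 1

theorem idxOfL_lt {l : List (MForm I)} {b : MForm I} (h : b ∈ l) : idxOfL l b < l.length := by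
  induction l with
  | nil => cases h
  | cons a t ih =>
    rw [idxOfL]
    split_ifs with hab
    · simp
    · rw [List.length_cons, Nat.add_lt_add_iff_right]
      exact ih ((List.mem_cons.1 h).resolve_left fun e => hab e.symm)

noncomputable def nthForm : List (MForm I) → ℕ → MForm I
  | [], _ => .fls
  | a :: _, 0 => a
  | _ :: t, m+1 => nthForm t m

theorem nthForm_idxOfL {l : List (MForm I)} {b : MForm I} (h : b ∈ l) :
    nthForm l (idxOfL l b) = b := by
  induction l with
  | nil => cases h
  | cons a t ih =>
    rw [idxOfL]
    split_ifs with hab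
    · rw [nthForm]; exact hab
    · rw [nthForm]
      exact ih ((List.mem_cons.1 h).resolve_left fun e => hab e.symm)

theorem idxOfL_inj {l : List (MForm I)} {b b' : MForm I} (hb : b ∈ l) (hb' : b' ∈ l)
    (h : idxOfL l b = idxOfL l b') : b = b' := by
  rw [← nthForm_idxOfL hb, ← nthForm_idxOfL hb', h]

def isLitF : MForm I → Prop
  | .prop _ => True
  | .box _ _ => True
  | _ => False

def isBoxF : MForm I → Prop
  | .box _ _ => True
  | _ => False

end FFMP
namespace FFMP
open MForm
variable {I : Type}

theorem mem_le_foldr_max (l : List ℕ) (p : ℕ) (h : p ∈ l) : p ≤ l.foldr max 0 := by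
  induction l with
  | nil => cases h
  | cons a t ih =>
    rcases List.mem_cons.1 h with rfl | h
    · exact le_max_left _ _
    · exact le_trans (ih h) (le_max_right _ _)

def isLitB : MForm I → Bool
  | .prop _ => true
  | .box _ _ => true
  | _ => false

def isBoxB : MForm I → Bool
  | .box _ _ => true
  | _ => false

theorem substP_neg (σ : ℕ → MForm I) (a : MForm I) : (neg a).substP σ = neg (a.substP σ) := rfl

theorem substP_conj (σ : ℕ → MForm I) (a b : MForm I) :
    (conj a b).substP σ = conj (a.substP σ) (b.substP σ) := rfl

theorem substP_bigConj (σ : ℕ → MForm I) (l : List (MForm I)) :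
    (bigConj l).substP σ = bigConj (l.map (fun a => a.substP σ)) := by
  induction l with
  | nil => rfl
  | cons a t ih => rw [bigConj, substP_conj, ih]; rfl

end FFMP
namespace FFMP
open MForm
open scoped Classical

structure Setup (I : Type) (n : ℕ) where
  c : I → Fin (n+1)
  Ls : Fin (n+1) → Set (MForm I)
  hnorm : ∀ j, IsNormalIn {i | c i = j} (Ls j)
  hfmp : ∀ j, HasFMP {i | c i = j} (Ls j)
  phi : MForm I
  hphi : phi ∉ FusionLogic Ls

namespace Setup
variable {I : Type} {n : ℕ} (St : Setup I n)

noncomputable def N0 : ℕ := (propsOf St.phi).foldr max 0 + 1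
noncomputable def Blist : List (MForm I) := (subfsM St.phi).filter isBoxB
noncomputable def Lit : List (MForm I) := (subfsM St.phi).filter isLitB
noncomputable def deg : ℕ := depthM St.phi
noncomputable def hIdx (b : MForm I) : ℕ := St.N0 + idxOfL St.Blist b

noncomputable def surr (k : Fin (n+1)) : MForm I → MForm I
  | .prop p => .prop p
  | .fls => .fls
  | .imp a b => .imp (surr k a) (surr k b)
  | .box i a => if St.c i = k then .box i (surr k a) else .prop (St.hIdx (.box i a))

noncomputable def sback (q : ℕ) : MForm I :=
  if q < St.N0 then .prop q
  else if q - St.N0 < St.Blist.length then nthForm St.Blist (q - St.N0) else .prop q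

def Tidy (ψ : MForm I) : Prop :=
  (∀ (i : I) (a : MForm I), MForm.box i a ∈ subfsM ψ → MForm.box i a ∈ St.Blist) ∧
  (∀ p : ℕ, MForm.prop p ∈ subfsM ψ → p < St.N0)

theorem lt_N0_of_mem {p : ℕ} (h : p ∈ propsOf St.phi) : p < St.N0 :=
  Nat.lt_succ_of_le (mem_le_foldr_max _ p h)

theorem tidy_of_mem {ψ : MForm I} (h : ψ ∈ subfsM St.phi) : St.Tidy ψ := by
  constructor
  · intro i a hmem
    exact List.mem_filter.2 ⟨subfsM_trans h hmem, rfl⟩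
  · intro p hmem
    exact St.lt_N0_of_mem (mem_propsOf (subfsM_trans h hmem))

theorem tidy_sub {ψ χ : MForm I} (h : St.Tidy χ) (hm : ψ ∈ subfsM χ) : St.Tidy ψ :=
  ⟨fun i a hmem => h.1 i a (subfsM_trans hm hmem),
   fun p hmem => h.2 p (subfsM_trans hm hmem)⟩

theorem sback_small {p : ℕ} (h : p < St.N0) : St.sback p = .prop p := by
  rw [sback, if_pos h]

theorem sback_hIdx {b : MForm I} (h : b ∈ St.Blist) : St.sback (St.hIdx b) = b := by
  rw [sback, hIdx, if_neg (by omega), Nat.add_sub_cancel_left,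
    if_pos (idxOfL_lt h), nthForm_idxOfL h]

theorem surr_substP {k : Fin (n+1)} : ∀ {ψ : MForm I}, St.Tidy ψ →
    (St.surr k ψ).substP St.sback = ψ := by
  intro ψ
  induction ψ with
  | prop p =>
    intro h
    rw [surr, substP, St.sback_small (h.2 p (self_mem_subfsM _))]
  | fls => intro _; rfl
  | imp a b iha ihb =>
    intro h
    rw [surr, substP, iha (St.tidy_sub h (imp_left_mem (self_mem_subfsM _))),
      ihb (St.tidy_sub h (imp_right_mem (self_mem_subfsM _)))]
  | box i a iha =>
    intro h
    rw [surr]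
    split_ifs with hc
    · rw [substP, iha (St.tidy_sub h (box_arg_mem (self_mem_subfsM _)))]
    · rw [substP, St.sback_hIdx (h.1 i a (self_mem_subfsM _))]

theorem surr_usesOnly (k : Fin (n+1)) : ∀ ψ : MForm I, UsesOnly {i | St.c i = k} (St.surr k ψ)
  | .prop _ => trivial
  | .fls => trivial
  | .imp a b => ⟨surr_usesOnly k a, surr_usesOnly k b⟩
  | .box i a => by
    rw [surr]
    split_ifs with hc
    · exact ⟨hc, surr_usesOnly k a⟩
    · trivial

theorem surr_neg (k : Fin (n+1)) (a : MForm I) : St.surr k (neg a) = neg (St.surr k a) := by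
  simp only [neg, surr]

theorem surr_conj (k : Fin (n+1)) (a b : MForm I) :
    St.surr k (conj a b) = conj (St.surr k a) (St.surr k b) := by
  simp only [conj, neg, surr]

theorem surr_bigConj (k : Fin (n+1)) (l : List (MForm I)) :
    St.surr k (bigConj l) = bigConj (l.map (St.surr k)) := by
  induction l with
  | nil => simp only [bigConj, List.map_nil, St.surr_neg]; rfl
  | cons a t ih => rw [bigConj, surr_conj, ih]; rfl

/-- `Dhat D` : full description formula given the list `D` of true literals. -/
noncomputable def Dhat (D : List (MForm I)) : MForm I :=
  bigConj (St.Lit.map (fun b => if b ∈ D then b else neg b))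

def FCons (D : List (MForm I)) : Prop := neg (St.Dhat D) ∉ FusionLogic St.Ls

theorem tidy_fls : St.Tidy (.fls : MForm I) := by
  constructor
  · intro i a h; simp only [subfsM, List.mem_singleton] at h; cases h
  · intro p h; simp only [subfsM, List.mem_singleton] at h; cases h

theorem tidy_imp {a b : MForm I} (ha : St.Tidy a) (hb : St.Tidy b) : St.Tidy (a.imp b) := by
  constructor
  · intro i x h
    rcases List.mem_cons.1 h with h | h
    · cases h
    · rcases List.mem_append.1 h with h | h
      · exact ha.1 i x h
      · exact hb.1 i x h
  · intro p h
    rcases List.mem_cons.1 h with h | h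
    · cases h
    · rcases List.mem_append.1 h with h | h
      · exact ha.2 p h
      · exact hb.2 p h

theorem tidy_neg {a : MForm I} (ha : St.Tidy a) : St.Tidy (neg a) :=
  St.tidy_imp ha St.tidy_fls

theorem tidy_conj {a b : MForm I} (ha : St.Tidy a) (hb : St.Tidy b) : St.Tidy (conj a b) :=
  St.tidy_neg (St.tidy_imp ha (St.tidy_neg hb))

theorem tidy_bigConj {l : List (MForm I)} (h : ∀ a ∈ l, St.Tidy a) : St.Tidy (bigConj l) := by
  induction l with
  | nil => exact St.tidy_neg St.tidy_fls
  | cons a t ih =>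
    exact St.tidy_conj (h a (List.mem_cons_self))
      (ih fun b hb => h b (List.mem_cons_of_mem a hb))

theorem tidy_of_mem_Lit {b : MForm I} (h : b ∈ St.Lit) : St.Tidy b :=
  St.tidy_of_mem (List.mem_filter.1 h).1

theorem tidy_Dhat (D : List (MForm I)) : St.Tidy (St.Dhat D) := by
  refine St.tidy_bigConj ?_
  intro a ha
  rw [List.mem_map] at ha
  obtain ⟨b, hb, rfl⟩ := ha
  split_ifs
  · exact St.tidy_of_mem_Lit hb
  · exact St.tidy_neg (St.tidy_of_mem_Lit hb)

theorem surr_Dhat_substP (k : Fin (n+1)) (D : List (MForm I)) :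
    (St.surr k (St.Dhat D)).substP St.sback = St.Dhat D :=
  St.surr_substP (St.tidy_Dhat D)

noncomputable def ModsK (k : Fin (n+1)) : List I :=
  (modsOf St.phi).filter (fun i => decide (St.c i = k))

noncomputable def XiF (k : Fin (n+1)) : MForm I :=
  bigConj ((St.Lit.sublists.filter (fun S => decide (¬ St.FCons S))).map
    (fun S => neg (St.surr k (St.Dhat S))))

noncomputable def CAxF (k : Fin (n+1)) : ℕ → MForm I
  | 0 => St.XiF k
  | m+1 => conj (CAxF k m) (bigConj ((St.ModsK k).map (fun i => .box i (CAxF k m))))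

theorem F_XiF_subst (k : Fin (n+1)) : (St.XiF k).substP St.sback ∈ FusionLogic St.Ls := by
  rw [XiF, substP_bigConj]
  refine F_bigConj ?_
  intro a ha
  rw [List.map_map, List.mem_map] at ha
  obtain ⟨S, hS, rfl⟩ := ha
  have hSc : ¬ St.FCons S := by
    have := (List.mem_filter.1 hS).2
    rwa [decide_eq_true_iff] at this
  show (neg (St.surr k (St.Dhat S))).substP St.sback ∈ _
  rw [substP_neg, St.surr_Dhat_substP]
  exact not_not.1 hSc

theorem F_CAxF_subst (k : Fin (n+1)) (m : ℕ) :
    (St.CAxF k m).substP St.sback ∈ FusionLogic St.Ls := by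
  induction m with
  | zero => exact St.F_XiF_subst k
  | succ m ih =>
    rw [CAxF, substP_conj, substP_bigConj]
    refine F_conj ih (F_bigConj ?_)
    intro a ha
    rw [List.map_map, List.mem_map] at ha
    obtain ⟨i, hi, rfl⟩ := ha
    exact F_nec i ih

theorem usesOnly_XiF (k : Fin (n+1)) : UsesOnly {i | St.c i = k} (St.XiF k) := by
  refine usesOnly_bigConj ?_
  intro a ha
  rw [List.mem_map] at ha
  obtain ⟨S, _, rfl⟩ := ha
  exact usesOnly_neg (St.surr_usesOnly k _)

theorem usesOnly_CAxF (k : Fin (n+1)) (m : ℕ) : UsesOnly {i | St.c i = k} (St.CAxF k m) := by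
  induction m with
  | zero => exact St.usesOnly_XiF k
  | succ m ih =>
    refine usesOnly_conj ih (usesOnly_bigConj ?_)
    intro a ha
    rw [List.mem_map] at ha
    obtain ⟨i, hi, rfl⟩ := ha
    have : St.c i = k := by
      have := (List.mem_filter.1 hi).2
      rwa [decide_eq_true_iff] at this
    exact ⟨this, ih⟩

noncomputable def alphaF (k : Fin (n+1)) (D : List (MForm I)) : MForm I :=
  conj (St.surr k (St.Dhat D)) (St.CAxF k St.deg)

theorem usesOnly_alphaF (k : Fin (n+1)) (D : List (MForm I)) :
    UsesOnly {i | St.c i = k} (St.alphaF k D) :=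
  usesOnly_conj (St.surr_usesOnly k _) (St.usesOnly_CAxF k _)

theorem F_fls_not : (MForm.fls : MForm I) ∉ FusionLogic St.Ls :=
  fun h => St.hphi (F_fls_all h)

theorem cons_alphaF {k : Fin (n+1)} {D : List (MForm I)} (h : St.FCons D) :
    neg (St.alphaF k D) ∉ St.Ls k := by
  intro hmem
  have h1 : neg (St.alphaF k D) ∈ FusionLogic St.Ls := F_sub k hmem
  have h2 := F_substP St.sback h1
  rw [substP_neg, alphaF, substP_conj, St.surr_Dhat_substP] at h2
  exact h (F_neg_left h2 (St.F_CAxF_subst k St.deg))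

theorem cons_negfls {k : Fin (n+1)} : neg (neg (.fls : MForm I)) ∉ St.Ls k := by
  intro hmem
  refine St.F_fls_not (F_mp (F_sub k hmem) (F_taut ?_))
  intro val hf hi
  rw [hi, val_neg val hf hi, val_neg val hf hi]
  tauto

theorem cmp_exists (k : Fin (n+1)) (D : List (MForm I)) :
    ∃ C : NComp I, C.Good {i | St.c i = k} (St.Ls k) ∧
      (St.FCons D → C.rt ∈ semM C.R C.U (St.alphaF k D)) := by
  by_cases h : St.FCons D
  · obtain ⟨C, hg, hr⟩ :=
      ncomp_realize (St.hnorm k) (St.hfmp k) (St.usesOnly_alphaF k D) (St.cons_alphaF h)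
    exact ⟨C, hg, fun _ => hr⟩
  · obtain ⟨C, hg, _⟩ :=
      ncomp_realize (St.hnorm k) (St.hfmp k) (S := {i | St.c i = k})
        (α := neg .fls) (usesOnly_neg trivial) St.cons_negfls
    exact ⟨C, hg, fun hc => absurd hc h⟩

noncomputable def Cmp (k : Fin (n+1)) (D : List (MForm I)) : NComp I :=
  (St.cmp_exists k D).choose

theorem Cmp_good (k : Fin (n+1)) (D : List (MForm I)) :
    (St.Cmp k D).Good {i | St.c i = k} (St.Ls k) :=
  (St.cmp_exists k D).choose_spec.1

theorem Cmp_real (k : Fin (n+1)) {D : List (MForm I)} (h : St.FCons D) :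
    (St.Cmp k D).rt ∈ semM (St.Cmp k D).R (St.Cmp k D).U (St.alphaF k D) :=
  (St.cmp_exists k D).choose_spec.2 h

end Setup
end FFMP
namespace FFMP
open MForm
open scoped Classical
namespace Setup
variable {I : Type} {n : ℕ} (St : Setup I n)

/-- Boolean evaluation of a formula under a description. -/
def EvalD (D : List (MForm I)) : MForm I → Prop
  | .prop p => MForm.prop p ∈ D
  | .fls => False
  | .imp a b => EvalD D a → EvalD D b
  | .box i a => MForm.box i a ∈ D

section Val
variable (val : MForm I → Prop) (hf : ¬ val .fls)
  (hi : ∀ a b : MForm I, val (a.imp b) ↔ (val a → val b))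

include hf hi in
theorem val_Dhat_iff {D : List (MForm I)} (h : val (St.Dhat D)) :
    ∀ b ∈ St.Lit, (val b ↔ b ∈ D) := by
  intro b hb
  have h1 := (val_bigConj val hf hi _).1 h
  by_cases hbD : b ∈ D
  · have := h1 b (List.mem_map.2 ⟨b, hb, by rw [if_pos hbD]⟩)
    exact ⟨fun _ => hbD, fun _ => this⟩
  · have := h1 (neg b) (List.mem_map.2 ⟨b, hb, by rw [if_neg hbD]⟩)
    rw [val_neg val hf hi] at this
    exact ⟨fun hv => absurd hv this, fun h' => absurd h' hbD⟩

include hf hi in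
theorem val_eval {D : List (MForm I)} (hD : ∀ b ∈ St.Lit, (val b ↔ b ∈ D)) :
    ∀ ψ : MForm I, ψ ∈ subfsM St.phi → (val ψ ↔ EvalD D ψ) := by
  intro ψ
  induction ψ with
  | prop p =>
    intro h
    exact hD _ (List.mem_filter.2 ⟨h, rfl⟩)
  | fls =>
    intro _
    exact ⟨fun h => absurd h hf, fun h => h.elim⟩
  | imp a b iha ihb =>
    intro h
    rw [hi]
    show _ ↔ (EvalD D a → EvalD D b)
    rw [iha (imp_left_mem h), ihb (imp_right_mem h)]
  | box i a _ =>
    intro h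
    exact hD _ (List.mem_filter.2 ⟨h, rfl⟩)

include hf hi in
theorem val_Dhat_self : val (St.Dhat (St.Lit.filter (fun b => decide (val b)))) := by
  refine (val_bigConj val hf hi _).2 ?_
  intro a ha
  rw [List.mem_map] at ha
  obtain ⟨b, hb, rfl⟩ := ha
  split_ifs with hbS
  · have := (List.mem_filter.1 hbS).2
    rwa [decide_eq_true_iff] at this
  · rw [val_neg val hf hi]
    intro hv
    exact hbS (List.mem_filter.2 ⟨hb, decide_eq_true hv⟩)

end Val

theorem exists_D0 : ∃ D, D ∈ St.Lit.sublists ∧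
    neg (conj (St.Dhat D) (neg St.phi)) ∉ FusionLogic St.Ls := by
  by_contra hall
  push_neg at hall
  have hbig : bigConj (St.Lit.sublists.map
      (fun S => neg (conj (St.Dhat S) (neg St.phi)))) ∈ FusionLogic St.Ls := by
    refine F_bigConj ?_
    intro a ha
    rw [List.mem_map] at ha
    obtain ⟨S, hS, rfl⟩ := ha
    exact hall S hS
  refine St.hphi (F_mp hbig (F_taut ?_))
  intro val hf hi
  rw [hi]
  intro hbig'
  by_contra hphiv
  set Sv := St.Lit.filter (fun b => decide (val b)) with hSv
  have hmem : Sv ∈ St.Lit.sublists := List.mem_sublists.2 (List.filter_sublist)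
  have h1 := (val_bigConj val hf hi _).1 hbig' _
    (List.mem_map.2 ⟨Sv, hmem, rfl⟩)
  rw [val_neg val hf hi, val_conj val hf hi, val_neg val hf hi] at h1
  exact h1 ⟨St.val_Dhat_self val hf hi, hphiv⟩

noncomputable def D0 : List (MForm I) := St.exists_D0.choose

theorem D0_mem : St.D0 ∈ St.Lit.sublists := St.exists_D0.choose_spec.1

theorem D0_not_F : neg (conj (St.Dhat St.D0) (neg St.phi)) ∉ FusionLogic St.Ls :=
  St.exists_D0.choose_spec.2

theorem D0_fcons : St.FCons St.D0 := by
  intro hmem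
  refine St.D0_not_F (F_mp hmem (F_taut ?_))
  intro val hf hi
  simp only [hi, val_neg val hf hi, val_conj val hf hi]
  tauto

theorem D0_not_eval : ¬ EvalD St.D0 St.phi := by
  intro hev
  refine St.D0_not_F (F_taut ?_)
  intro val hf hi
  rw [val_neg val hf hi, val_conj val hf hi, val_neg val hf hi]
  rintro ⟨hDhat, hnphi⟩
  have hD := St.val_Dhat_iff val hf hi hDhat
  exact hnphi ((St.val_eval val hf hi hD St.phi (self_mem_subfsM _)).2 hev)

/-- The description attached to world `u` of the component `Cmp k D`. -/
noncomputable def descAt (k : Fin (n+1)) (D : List (MForm I)) (u : ℕ) : List (MForm I) :=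
  St.Lit.filter (fun b => decide (u ∈ semM (St.Cmp k D).R (St.Cmp k D).U (St.surr k b)))

theorem mem_descAt {k : Fin (n+1)} {D : List (MForm I)} {u : ℕ} {b : MForm I} :
    b ∈ St.descAt k D u ↔
      b ∈ St.Lit ∧ u ∈ semM (St.Cmp k D).R (St.Cmp k D).U (St.surr k b) := by
  rw [descAt, List.mem_filter, decide_eq_true_iff]

theorem descAt_mem_sublists (k : Fin (n+1)) (D : List (MForm I)) (u : ℕ) :
    St.descAt k D u ∈ St.Lit.sublists := List.mem_sublists.2 (List.filter_sublist)

/-- Descriptions along a path (deepest step first). -/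
noncomputable def cDesc : List (Fin (n+1) × ℕ) → List (MForm I)
  | [] => St.D0
  | (k,u) :: t => St.descAt k (cDesc t) u

def creatorOf : List (Fin (n+1) × ℕ) → Option (Fin (n+1))
  | [] => none
  | (k,_) :: _ => some k

def ValidP : List (Fin (n+1) × ℕ) → Prop
  | [] => True
  | (k,u) :: t => ValidP t ∧ creatorOf t ≠ some k ∧ u ≠ (St.Cmp k (St.cDesc t)).rt ∧
      u < (St.Cmp k (St.cDesc t)).size ∧ t.length < St.deg

theorem cDesc_mem : ∀ t : List (Fin (n+1) × ℕ), St.cDesc t ∈ St.D0 :: St.Lit.sublists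
  | [] => List.mem_cons_self
  | (k,u) :: t => List.mem_cons_of_mem _ (St.descAt_mem_sublists k (St.cDesc t) u)

noncomputable def szBound : ℕ :=
  ((St.D0 :: St.Lit.sublists).map
    (fun D => ((List.finRange (n+1)).map (fun k => (St.Cmp k D).size)).foldr max 0)).foldr max 0

theorem size_le_szBound (t : List (Fin (n+1) × ℕ)) (k : Fin (n+1)) :
    (St.Cmp k (St.cDesc t)).size ≤ St.szBound := by
  refine le_trans ?_ (mem_le_foldr_max _ _
    (List.mem_map.2 ⟨St.cDesc t, St.cDesc_mem t, rfl⟩))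
  exact mem_le_foldr_max _ _ (List.mem_map.2 ⟨k, List.mem_finRange k, rfl⟩)

theorem validP_length : ∀ {p : List (Fin (n+1) × ℕ)}, St.ValidP p → p.length ≤ St.deg
  | [], _ => Nat.zero_le _
  | (k,u) :: t, h => by
    rw [List.length_cons]
    exact h.2.2.2.2

theorem validP_tail {s : Fin (n+1) × ℕ} {t : List (Fin (n+1) × ℕ)}
    (h : St.ValidP (s :: t)) : St.ValidP t := by
  obtain ⟨k, u⟩ := s
  exact h.1

theorem validP_entry : ∀ {p : List (Fin (n+1) × ℕ)}, St.ValidP p →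
    ∀ s ∈ p, s.2 < St.szBound + 1 := by
  intro p
  induction p with
  | nil => intro _ s hs; cases hs
  | cons a t ih =>
    intro h s hs
    obtain ⟨k, u⟩ := a
    rcases List.mem_cons.1 hs with rfl | hs
    · exact Nat.lt_succ_of_le (le_trans (Nat.le_of_lt h.2.2.2.1) (St.size_le_szBound t k))
    · exact ih h.1 s hs

theorem validP_finite : Finite {p : List (Fin (n+1) × ℕ) // St.ValidP p} := by
  let g : Fin (n+1) × ℕ → Fin (n+1) × Fin (St.szBound + 1) := fun s =>
    (s.1, ⟨min s.2 St.szBound, Nat.lt_succ_of_le (min_le_right _ _)⟩)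
  let f : {p : List (Fin (n+1) × ℕ) // St.ValidP p} →
      (Fin (St.deg + 1) → Option (Fin (n+1) × Fin (St.szBound + 1))) := fun p i =>
    (p.val[(i : ℕ)]?).map g
  have hinj : Function.Injective f := by
    intro p q hpq
    apply Subtype.ext
    apply List.ext_getElem?
    intro m
    by_cases hm : m < St.deg + 1
    · have h := congrFun hpq ⟨m, hm⟩
      simp only [f] at h
      cases hp : p.val[m]? with
      | none =>
        cases hq : q.val[m]? with
        | none => rfl
        | some s => rw [hp, hq] at h; simp [g] at h
      | some s =>
        cases hq : q.val[m]? with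
        | none => rw [hp, hq] at h; simp [g] at h
        | some s' =>
          rw [hp, hq] at h
          simp only [Option.map_some, Option.some.injEq, g, Prod.mk.injEq] at h
          obtain ⟨h1, h2⟩ := h
          have hs : s.2 ≤ St.szBound :=
            Nat.lt_succ_iff.1 (St.validP_entry p.2 s (List.mem_of_getElem? hp))
          have hs' : s'.2 ≤ St.szBound :=
            Nat.lt_succ_iff.1 (St.validP_entry q.2 s' (List.mem_of_getElem? hq))
          have h2' : min s.2 St.szBound = min s'.2 St.szBound := congrArg Fin.val h2
          rw [min_eq_left hs, min_eq_left hs'] at h2'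
          exact congrArg some (Prod.ext h1 h2')
    · have hp : p.val[m]? = none := by
        rw [List.getElem?_eq_none_iff]
        exact le_trans (St.validP_length p.2) (by omega)
      have hq : q.val[m]? = none := by
        rw [List.getElem?_eq_none_iff]
        exact le_trans (St.validP_length q.2) (by omega)
      rw [hp, hq]
  exact Finite.of_injective f hinj

end Setup
end FFMP
namespace FFMP
open MForm
open scoped Classical
namespace Setup
variable {I : Type} {n : ℕ} (St : Setup I n)

noncomputable def GC (l : Fin (n+1)) : NComp I := St.Cmp l []
noncomputable def mG (l : Fin (n+1)) : ℕ := (St.GC l).size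

theorem mG_pos (l : Fin (n+1)) : 0 < St.mG l :=
  lt_of_le_of_lt (Nat.zero_le _) (St.Cmp_good l []).1

noncomputable def qC : ℕ := ∏ l : Fin (n+1), St.mG l

def PthT := {p : List (Fin (n+1) × ℕ) // St.ValidP p}

instance : Finite St.PthT := St.validP_finite

def Wld := Fin St.qC × St.PthT

instance : Finite St.Wld := inferInstanceAs (Finite (Fin St.qC × St.PthT))

def IsLeafFor (w : St.Wld) (l : Fin (n+1)) : Prop :=
  w.2.val.length = St.deg ∧ creatorOf w.2.val ≠ some l

def LeafT (l : Fin (n+1)) := {w : St.Wld // St.IsLeafFor w l}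

instance (l : Fin (n+1)) : Finite (St.LeafT l) :=
  inferInstanceAs (Finite {w : St.Wld // St.IsLeafFor w l})

theorem leafEquiv_exists (l : Fin (n+1)) :
    ∃ (t : ℕ) (_ : St.LeafT l ≃ Fin t × Fin (St.mG l)), True := by
  haveI : Fintype St.PthT := Fintype.ofFinite _
  haveI : Fintype (St.LeafT l) := Fintype.ofFinite _
  let PL := {pp : St.PthT // pp.val.length = St.deg ∧ creatorOf pp.val ≠ some l}
  haveI : Fintype PL := Fintype.ofFinite _
  let e1 : St.LeafT l ≃ Fin St.qC × PL :=
    { toFun := fun w => (w.val.1, ⟨w.val.2, w.prop⟩)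
      invFun := fun z => ⟨(z.1, z.2.val), z.2.prop⟩
      left_inv := fun w => rfl
      right_inv := fun z => rfl }
  have hdvd : St.mG l ∣ St.qC := Finset.dvd_prod_of_mem _ (Finset.mem_univ l)
  have hq : St.qC = St.mG l * (St.qC / St.mG l) := (Nat.mul_div_cancel' hdvd).symm
  have hcard : Fintype.card (St.LeafT l) =
      ((St.qC / St.mG l) * Fintype.card PL) * St.mG l := by
    rw [Fintype.card_congr e1, Fintype.card_prod, Fintype.card_fin]
    calc St.qC * Fintype.card PL
        = (St.mG l * (St.qC / St.mG l)) * Fintype.card PL := by rw [← hq]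
      _ = ((St.qC / St.mG l) * Fintype.card PL) * St.mG l := by ring
  exact ⟨_, (Fintype.equivFinOfCardEq hcard).trans finProdFinEquiv.symm, trivial⟩

noncomputable def tG (l : Fin (n+1)) : ℕ := (St.leafEquiv_exists l).choose

noncomputable def leafEquiv (l : Fin (n+1)) : St.LeafT l ≃ Fin (St.tG l) × Fin (St.mG l) :=
  (St.leafEquiv_exists l).choose_spec.choose

noncomputable def cmpAt (p : List (Fin (n+1) × ℕ)) (k : Fin (n+1)) : NComp I :=
  St.Cmp k (St.cDesc p)

/-- The relations of the final model. -/
def RM (i : I) (x y : St.Wld) : Prop :=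
  (x.1 = y.1 ∧
    ((∃ u', y.2.val = (St.c i, u') :: x.2.val ∧
        (St.cmpAt x.2.val (St.c i)).R i (St.cmpAt x.2.val (St.c i)).rt u') ∨
     (y.2.val = x.2.val ∧ creatorOf x.2.val ≠ some (St.c i) ∧ x.2.val.length < St.deg ∧
        (St.cmpAt x.2.val (St.c i)).R i (St.cmpAt x.2.val (St.c i)).rt
          (St.cmpAt x.2.val (St.c i)).rt) ∨
     (∃ t u u', x.2.val = (St.c i, u) :: t ∧ y.2.val = (St.c i, u') :: t ∧
        (St.cmpAt t (St.c i)).R i u u') ∨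
     (∃ u, x.2.val = (St.c i, u) :: y.2.val ∧
        (St.cmpAt y.2.val (St.c i)).R i u (St.cmpAt y.2.val (St.c i)).rt))) ∨
  (∃ (hx : St.IsLeafFor x (St.c i)) (hy : St.IsLeafFor y (St.c i)),
      (St.leafEquiv (St.c i) ⟨x, hx⟩).1 = (St.leafEquiv (St.c i) ⟨y, hy⟩).1 ∧
      (St.GC (St.c i)).R i ((St.leafEquiv (St.c i) ⟨x, hx⟩).2 : ℕ)
        ((St.leafEquiv (St.c i) ⟨y, hy⟩).2 : ℕ))

/-- Valuation on paths. -/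
noncomputable def VMp (q : ℕ) : List (Fin (n+1) × ℕ) → Prop
  | [] => MForm.prop q ∈ St.D0
  | (k,u) :: t => u ∈ (St.cmpAt t k).U q

/-- The valuation of the final model. -/
noncomputable def VM (q : ℕ) : Set St.Wld := {w | St.VMp q w.2.val}

end Setup
end FFMP
namespace FFMP
open MForm
open scoped Classical
namespace Setup
variable {I : Type} {n : ℕ} (St : Setup I n)

theorem cmp_rt_lt (k : Fin (n+1)) (D : List (MForm I)) :
    (St.Cmp k D).rt < (St.Cmp k D).size := (St.Cmp_good k D).1

theorem cmp_supp {k : Fin (n+1)} {D : List (MForm I)} {i : I} {x y : ℕ}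
    (h : (St.Cmp k D).R i x y) : x < (St.Cmp k D).size ∧ y < (St.Cmp k D).size :=
  (St.Cmp_good k D).2.1 i x y h

theorem cmp_col {k : Fin (n+1)} {D : List (MForm I)} {i : I} (h : ¬ St.c i = k) :
    ∀ x y, ¬ (St.Cmp k D).R i x y := (St.Cmp_good k D).2.2.1 i h

theorem cmp_logic (k : Fin (n+1)) (D : List (MForm I)) :
    ∀ ψ ∈ St.Ls k, ∀ V : ℕ → Set ℕ, ∀ w, w < (St.Cmp k D).size →
      w ∈ semM (St.Cmp k D).R V ψ := (St.Cmp_good k D).2.2.2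

theorem validP_cons {k : Fin (n+1)} {u : ℕ} {t : List (Fin (n+1) × ℕ)} :
    St.ValidP ((k,u) :: t) ↔ (St.ValidP t ∧ creatorOf t ≠ some k ∧
      u ≠ (St.Cmp k (St.cDesc t)).rt ∧ u < (St.Cmp k (St.cDesc t)).size ∧
      t.length < St.deg) := Iff.rfl

/-- Edges at a world created inside a component of the colour of `i`. -/
theorem edge_creator {i : I} {x y : St.Wld} {u : ℕ} {t : List (Fin (n+1) × ℕ)}
    (hx : x.2.val = (St.c i, u) :: t) :
    St.RM i x y ↔ (x.1 = y.1 ∧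
      ((∃ u', u' ≠ (St.cmpAt t (St.c i)).rt ∧ y.2.val = (St.c i, u') :: t ∧
          (St.cmpAt t (St.c i)).R i u u') ∨
       (y.2.val = t ∧ (St.cmpAt t (St.c i)).R i u (St.cmpAt t (St.c i)).rt))) := by
  constructor
  · rintro (⟨hcopy, hcase⟩ | ⟨hlx, hly, hgr, hR⟩)
    · rcases hcase with ⟨u', hy, hR⟩ | ⟨hy, hcr, hlen, hR⟩ | ⟨t₀, u₀, u₀', hx', hy, hR⟩ |
        ⟨u₀, hx', hR⟩
      · exfalso
        have hv := y.2.prop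
        rw [hy] at hv
        rw [St.validP_cons] at hv
        rw [hx] at hv
        exact hv.2.1 rfl
      · exfalso
        rw [hx] at hcr
        exact hcr rfl
      · rw [hx] at hx'
        injection hx' with h1 h2
        injection h1 with h1a h1b
        subst h1b h2
        refine ⟨hcopy, Or.inl ⟨u₀', ?_, hy, hR⟩⟩
        have hv := y.2.prop
        rw [hy, St.validP_cons] at hv
        exact hv.2.2.1
      · rw [hx] at hx'
        injection hx' with h1 h2
        injection h1 with h1a h1b
        subst h1b
        exact ⟨hcopy, Or.inr ⟨h2.symm, h2 ▸ hR⟩⟩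
    · exfalso
      rcases hlx with ⟨_, hcr⟩
      rw [hx] at hcr
      exact hcr rfl
  · rintro ⟨hcopy, ⟨u', hne, hy, hR⟩ | ⟨hy, hR⟩⟩
    · exact Or.inl ⟨hcopy, Or.inr (Or.inr (Or.inl ⟨t, u, u', hx, hy, hR⟩))⟩
    · exact Or.inl ⟨hcopy, Or.inr (Or.inr (Or.inr ⟨u, by rw [hx, hy], by rw [hy]; exact hR⟩))⟩

/-- Edges at a non-leaf world for a foreign colour. -/
theorem edge_internal {i : I} {x y : St.Wld}
    (hcr : creatorOf x.2.val ≠ some (St.c i)) (hlen : x.2.val.length < St.deg) :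
    St.RM i x y ↔ (x.1 = y.1 ∧
      ((∃ u', u' ≠ (St.cmpAt x.2.val (St.c i)).rt ∧ y.2.val = (St.c i, u') :: x.2.val ∧
          (St.cmpAt x.2.val (St.c i)).R i (St.cmpAt x.2.val (St.c i)).rt u') ∨
       (y = x ∧ (St.cmpAt x.2.val (St.c i)).R i (St.cmpAt x.2.val (St.c i)).rt
          (St.cmpAt x.2.val (St.c i)).rt))) := by
  constructor
  · rintro (⟨hcopy, hcase⟩ | ⟨hlx, hly, hgr, hR⟩)
    · rcases hcase with ⟨u', hy, hR⟩ | ⟨hy, _, _, hR⟩ | ⟨t₀, u₀, u₀', hx', hy, hR⟩ |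
        ⟨u₀, hx', hR⟩
      · refine ⟨hcopy, Or.inl ⟨u', ?_, hy, hR⟩⟩
        have hv := y.2.prop
        rw [hy, St.validP_cons] at hv
        exact hv.2.2.1
      · refine ⟨hcopy, Or.inr ⟨?_, hR⟩⟩
        exact Prod.ext hcopy.symm (Subtype.ext hy)
      · exfalso; rw [hx'] at hcr; exact hcr rfl
      · exfalso; rw [hx'] at hcr; exact hcr rfl
    · exfalso
      rcases hlx with ⟨hl, _⟩
      omega
  · rintro ⟨hcopy, ⟨u', hne, hy, hR⟩ | ⟨rfl, hR⟩⟩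
    · exact Or.inl ⟨hcopy, Or.inl ⟨u', hy, hR⟩⟩
    · exact Or.inl ⟨rfl, Or.inr (Or.inl ⟨rfl, hcr, hlen, hR⟩)⟩

/-- Edges at a leaf for a foreign colour. -/
theorem edge_leaf {i : I} {x y : St.Wld} (hleaf : St.IsLeafFor x (St.c i)) :
    St.RM i x y ↔ ∃ (hy : St.IsLeafFor y (St.c i)),
      (St.leafEquiv (St.c i) ⟨x, hleaf⟩).1 = (St.leafEquiv (St.c i) ⟨y, hy⟩).1 ∧
      (St.GC (St.c i)).R i ((St.leafEquiv (St.c i) ⟨x, hleaf⟩).2 : ℕ)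
        ((St.leafEquiv (St.c i) ⟨y, hy⟩).2 : ℕ) := by
  constructor
  · rintro (⟨hcopy, hcase⟩ | ⟨hlx, hly, hgr, hR⟩)
    · exfalso
      rcases hcase with ⟨u', hy, hR⟩ | ⟨hy, hcr, hl, hR⟩ | ⟨t₀, u₀, u₀', hx', hy, hR⟩ |
        ⟨u₀, hx', hR⟩
      · have hv := y.2.prop
        rw [hy, St.validP_cons] at hv
        have h1 := hv.2.2.2.2
        have h2 := hleaf.1
        omega
      · have h2 := hleaf.1
        omega
      · have := hleaf.2; rw [hx'] at this; exact this rfl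
      · have := hleaf.2; rw [hx'] at this; exact this rfl
    · exact ⟨hly, hgr, hR⟩
  · rintro ⟨hy, hgr, hR⟩
    exact Or.inr ⟨hleaf, hy, hgr, hR⟩

end Setup
end FFMP
namespace FFMP
open MForm
open scoped Classical

/-- Domain-restricted transfer lemma. -/
theorem sem_embed_dom {I : Type} {W₁ W₂ : Type} {R₁ : I → W₁ → W₁ → Prop} {V₁ : ℕ → Set W₁}
    {R₂ : I → W₂ → W₂ → Prop} {V₂ : ℕ → Set W₂} {g : W₁ → W₂} {S : Set I} {Dom : Set W₁}
    (hcl : ∀ i ∈ S, ∀ x ∈ Dom, ∀ y, R₁ i x y → y ∈ Dom)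
    (hR₁ : ∀ i ∈ S, ∀ x ∈ Dom, ∀ y, R₁ i x y → R₂ i (g x) (g y))
    (hR₂ : ∀ i ∈ S, ∀ x ∈ Dom, ∀ y₂, R₂ i (g x) y₂ → ∃ y, R₁ i x y ∧ g y = y₂)
    (hV : ∀ p, ∀ x ∈ Dom, (x ∈ V₁ p ↔ g x ∈ V₂ p)) :
    ∀ φ : MForm I, UsesOnly S φ → ∀ x ∈ Dom, (x ∈ semM R₁ V₁ φ ↔ g x ∈ semM R₂ V₂ φ)
  | .prop p, _, x, hx => hV p x hx
  | .fls, _, _, _ => Iff.rfl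
  | .imp a b, hu, x, hx => by
    rw [mem_semM_imp, mem_semM_imp,
      sem_embed_dom hcl hR₁ hR₂ hV a hu.1 x hx, sem_embed_dom hcl hR₁ hR₂ hV b hu.2 x hx]
  | .box i a, hu, x, hx => by
    rw [mem_semM_box, mem_semM_box]
    constructor
    · intro h y₂ hy₂
      obtain ⟨y, hy, rfl⟩ := hR₂ i hu.1 x hx y₂ hy₂
      exact (sem_embed_dom hcl hR₁ hR₂ hV a hu.2 y (hcl i hu.1 x hx y hy)).1 (h y hy)
    · intro h y hy
      exact (sem_embed_dom hcl hR₁ hR₂ hV a hu.2 y (hcl i hu.1 x hx y hy)).2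
        (h (g y) (hR₁ i hu.1 x hx y hy))

namespace Setup
variable {I : Type} {n : ℕ} (St : Setup I n)

theorem block_valid (j : Fin (n+1)) {ψ : MForm I} (hψ : ψ ∈ St.Ls j)
    (V' : ℕ → Set St.Wld) (a : Fin St.qC) (t : List (Fin (n+1) × ℕ)) (ht : St.ValidP t)
    (hcr : creatorOf t ≠ some j) (hlen : t.length < St.deg) :
    ((⟨a, ⟨t, ht⟩⟩ : St.Wld) ∈ semM St.RM V' ψ) ∧
    (∀ (v : ℕ) (h : St.ValidP ((j,v)::t)), (⟨a, ⟨(j,v)::t, h⟩⟩ : St.Wld) ∈ semM St.RM V' ψ) := by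
  have hu : UsesOnly {i | St.c i = j} ψ := (St.hnorm j).inSig ψ hψ
  set C : NComp I := St.Cmp j (St.cDesc t) with hC
  set wfn : ℕ → St.Wld := fun v =>
    if h : St.ValidP ((j,v)::t) then ⟨a, ⟨(j,v)::t, h⟩⟩ else ⟨a, ⟨t, ht⟩⟩ with hwfn
  set Dom : Set ℕ := {v | v < C.size} with hDom
  have hg2 : wfn C.rt = ⟨a, ⟨t, ht⟩⟩ := by
    rw [hwfn]
    refine dif_neg ?_
    intro hval
    rw [St.validP_cons] at hval
    exact hval.2.2.1 rfl
  have hg1 : ∀ v, v ≠ C.rt → ∀ hval : St.ValidP ((j,v)::t),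
      wfn v = ⟨a, ⟨(j,v)::t, hval⟩⟩ := by
    intro v hv hval
    rw [hwfn]
    exact dif_pos hval
  have hvalid_of : ∀ v, v ∈ Dom → v ≠ C.rt → St.ValidP ((j,v)::t) := by
    intro v hvD hvne
    exact (St.validP_cons).2 ⟨ht, hcr, hvne, hvD, hlen⟩
  -- the embedding conditions
  have hmain := sem_embed_dom (I := I) (R₁ := C.R) (V₁ := fun p => {v | wfn v ∈ V' p})
    (R₂ := St.RM) (V₂ := V') (g := wfn) (S := {i | St.c i = j}) (Dom := Dom)
    ?_ ?_ ?_ ?_ ψ hu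
  · constructor
    · have hrtD : C.rt ∈ Dom := St.cmp_rt_lt j (St.cDesc t)
      have := (hmain C.rt hrtD).symm
      rw [hg2] at this
      refine this.2 ?_
      exact St.cmp_logic j (St.cDesc t) ψ hψ _ _ hrtD
    · intro v hval
      have hvne : v ≠ C.rt := by
        rw [St.validP_cons] at hval
        exact hval.2.2.1
      have hvD : v ∈ Dom := by
        rw [St.validP_cons] at hval
        exact hval.2.2.2.1
      have := (hmain v hvD).symm
      rw [hg1 v hvne hval] at this
      refine this.2 ?_
      exact St.cmp_logic j (St.cDesc t) ψ hψ _ _ hvD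
  -- hcl
  · intro i hci x hxD y hR
    exact (St.cmp_supp hR).2
  -- hR₁
  · intro i hci x hxD y hR
    have hci' : St.c i = j := hci
    subst hci'
    by_cases hx0 : x = C.rt
    · subst hx0
      by_cases hy0 : y = C.rt
      · subst hy0
        rw [hg2]
        refine (St.edge_internal ?_ ?_).2 ⟨rfl, Or.inr ⟨rfl, ?_⟩⟩
        · exact hcr
        · exact hlen
        · exact hR
      · rw [hg2, hg1 y hy0 (hvalid_of y ((St.cmp_supp hR).2) hy0)]
        refine (St.edge_internal ?_ ?_).2 ⟨rfl, Or.inl ⟨y, hy0, rfl, ?_⟩⟩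
        · exact hcr
        · exact hlen
        · exact hR
    · rw [hg1 x hx0 (hvalid_of x hxD hx0)]
      by_cases hy0 : y = C.rt
      · subst hy0
        rw [hg2]
        exact (St.edge_creator rfl).2 ⟨rfl, Or.inr ⟨rfl, hR⟩⟩
      · rw [hg1 y hy0 (hvalid_of y ((St.cmp_supp hR).2) hy0)]
        exact (St.edge_creator rfl).2 ⟨rfl, Or.inl ⟨y, hy0, rfl, hR⟩⟩
  -- hR₂
  · intro i hci x hxD y₂ hRM
    have hci' : St.c i = j := hci
    subst hci'
    by_cases hx0 : x = C.rt
    · subst hx0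
      rw [hg2] at hRM
      rcases (St.edge_internal hcr hlen).1 hRM with ⟨hcopy, hcase⟩
      rcases hcase with ⟨u', hne, hy, hR⟩ | ⟨rfl, hR⟩
      · refine ⟨u', hR, ?_⟩
        rw [hg1 u' hne (hvalid_of u' ((St.cmp_supp hR).2) hne)]
        refine Prod.ext hcopy (Subtype.ext ?_)
        exact hy.symm
      · exact ⟨C.rt, hR, hg2⟩
    · rw [hg1 x hx0 (hvalid_of x hxD hx0)] at hRM
      rcases (St.edge_creator rfl).1 hRM with ⟨hcopy, hcase⟩
      rcases hcase with ⟨u', hne, hy, hR⟩ | ⟨hy, hR⟩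
      · refine ⟨u', hR, ?_⟩
        rw [hg1 u' hne (hvalid_of u' ((St.cmp_supp hR).2) hne)]
        exact Prod.ext hcopy (Subtype.ext hy.symm)
      · refine ⟨C.rt, hR, ?_⟩
        rw [hg2]
        exact Prod.ext hcopy (Subtype.ext hy.symm)
  -- hV
  · intro p x hxD
    exact Iff.rfl

theorem leaf_valid (j : Fin (n+1)) {ψ : MForm I} (hψ : ψ ∈ St.Ls j)
    (V' : ℕ → Set St.Wld) (w : St.Wld) (hleaf : St.IsLeafFor w j) :
    w ∈ semM St.RM V' ψ := by
  have hu : UsesOnly {i | St.c i = j} ψ := (St.hnorm j).inSig ψ hψ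
  set Dom : Set ℕ := {v | v < St.mG j} with hDom
  set wfn : ℕ → St.Wld := fun v =>
    if h : v < St.mG j then
      ((St.leafEquiv j).symm ((St.leafEquiv j ⟨w, hleaf⟩).1, ⟨v, h⟩)).val
    else w with hwfn
  have hg : ∀ (v : ℕ) (h : v < St.mG j),
      wfn v = ((St.leafEquiv j).symm ((St.leafEquiv j ⟨w, hleaf⟩).1, ⟨v, h⟩)).val := by
    intro v h
    rw [hwfn]
    exact dif_pos h
  have hgleaf : ∀ (v : ℕ), v < St.mG j → St.IsLeafFor (wfn v) j := by
    intro v h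
    rw [hg v h]
    exact ((St.leafEquiv j).symm ((St.leafEquiv j ⟨w, hleaf⟩).1, ⟨v, h⟩)).prop
  have hgeq : ∀ (v : ℕ) (h : v < St.mG j) (pf : St.IsLeafFor (wfn v) j),
      St.leafEquiv j ⟨wfn v, pf⟩ = ((St.leafEquiv j ⟨w, hleaf⟩).1, ⟨v, h⟩) := by
    intro v h pf
    have h2 : (⟨wfn v, pf⟩ : St.LeafT j)
        = (St.leafEquiv j).symm ((St.leafEquiv j ⟨w, hleaf⟩).1, ⟨v, h⟩) :=
      Subtype.ext (hg v h)
    rw [h2, Equiv.apply_symm_apply]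
  have hw0 : wfn ((St.leafEquiv j ⟨w, hleaf⟩).2 : ℕ) = w := by
    rw [hg _ (St.leafEquiv j ⟨w, hleaf⟩).2.2]
    have h2 : ((St.leafEquiv j ⟨w, hleaf⟩).1,
        (⟨((St.leafEquiv j ⟨w, hleaf⟩).2 : ℕ), (St.leafEquiv j ⟨w, hleaf⟩).2.2⟩ :
          Fin (St.mG j))) = St.leafEquiv j ⟨w, hleaf⟩ :=
      Prod.ext rfl (Fin.ext rfl)
    rw [h2]
    exact congrArg Subtype.val ((St.leafEquiv j).symm_apply_apply ⟨w, hleaf⟩)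
  have hmain := sem_embed_dom (I := I) (R₁ := (St.GC j).R)
    (V₁ := fun p => {v | wfn v ∈ V' p})
    (R₂ := St.RM) (V₂ := V') (g := wfn) (S := {i | St.c i = j}) (Dom := Dom)
    ?_ ?_ ?_ ?_ ψ hu
  · have hD : ((St.leafEquiv j ⟨w, hleaf⟩).2 : ℕ) ∈ Dom :=
      (St.leafEquiv j ⟨w, hleaf⟩).2.2
    have := (hmain _ hD).symm
    rw [hw0] at this
    rw [this]
    exact St.cmp_logic j [] ψ hψ _ _ hD
  · intro i hci x hxD y hR
    exact (St.cmp_supp hR).2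
  · intro i hci x hxD y hR
    have hci' : St.c i = j := hci
    subst hci'
    have hyD : y ∈ Dom := (St.cmp_supp hR).2
    refine Or.inr ⟨hgleaf x hxD, hgleaf y hyD, ?_, ?_⟩
    · rw [hgeq x hxD, hgeq y hyD]
    · rw [hgeq x hxD, hgeq y hyD]
      exact hR
  · intro i hci x hxD y₂ hRM
    have hci' : St.c i = j := hci
    subst hci'
    obtain ⟨hy₂, hgr, hR⟩ := (St.edge_leaf (hgleaf x hxD)).1 hRM
    rw [hgeq x hxD] at hgr hR
    refine ⟨((St.leafEquiv (St.c i) ⟨y₂, hy₂⟩).2 : ℕ), ?_, ?_⟩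
    · exact hR
    · rw [hg _ (St.leafEquiv (St.c i) ⟨y₂, hy₂⟩).2.2]
      have h2 : ((St.leafEquiv (St.c i) ⟨w, hleaf⟩).1,
          (⟨((St.leafEquiv (St.c i) ⟨y₂, hy₂⟩).2 : ℕ),
            (St.leafEquiv (St.c i) ⟨y₂, hy₂⟩).2.2⟩ : Fin (St.mG (St.c i))))
          = St.leafEquiv (St.c i) ⟨y₂, hy₂⟩ := by
        rw [hgr]
        try exact Prod.ext rfl (Fin.ext rfl)
      rw [h2]
      exact congrArg Subtype.val ((St.leafEquiv (St.c i)).symm_apply_apply ⟨y₂, hy₂⟩)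
  · intro p x hxD
    exact Iff.rfl

theorem Ls_valid (j : Fin (n+1)) {ψ : MForm I} (hψ : ψ ∈ St.Ls j)
    (V' : ℕ → Set St.Wld) (w : St.Wld) : w ∈ semM St.RM V' ψ := by
  obtain ⟨a, p⟩ := w
  rcases hp : p.val with - | ⟨⟨k, u⟩, t⟩
  · -- root path
    rcases Nat.lt_or_ge 0 St.deg with hdeg | hdeg
    · have hpe : p = ⟨[], trivial⟩ := Subtype.ext hp
      rw [hpe]
      exact (St.block_valid j hψ V' a [] trivial (by simp [creatorOf]) hdeg).1
    · have hleaf : St.IsLeafFor (a, p) j := by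
        constructor
        · show p.val.length = St.deg
          rw [hp]; simp; omega
        · show creatorOf p.val ≠ some j
          rw [hp]; simp [creatorOf]
      exact St.leaf_valid j hψ V' _ hleaf
  · have hv : St.ValidP ((k,u) :: t) := by rw [← hp]; exact p.prop
    by_cases hkj : k = j
    · subst hkj
      have hpe : p = ⟨(k,u) :: t, hv⟩ := Subtype.ext hp
      rw [hpe]
      exact (St.block_valid k hψ V' a t hv.1 hv.2.1 hv.2.2.2.2).2 u hv
    · rcases Nat.lt_or_ge (p.val.length) St.deg with hlen | hlen
      · have hcr : creatorOf p.val ≠ some j := by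
          rw [hp]
          intro hcc
          rw [creatorOf] at hcc
          injection hcc with hcc'
          exact hkj hcc'
        have hpe : p = ⟨p.val, p.prop⟩ := Subtype.ext rfl
        rw [hpe]
        exact (St.block_valid j hψ V' a p.val p.prop hcr hlen).1
      · have hleaf : St.IsLeafFor (a, p) j := by
          constructor
          · have := St.validP_length p.prop
            show p.val.length = St.deg
            omega
          · show creatorOf p.val ≠ some j
            rw [hp]
            intro hcc
            rw [creatorOf] at hcc
            injection hcc with hcc'
            exact hkj hcc'
        exact St.leaf_valid j hψ V' _ hleaf

end Setup
end FFMP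
namespace FFMP
open MForm
open scoped Classical
namespace Setup
variable {I : Type} {n : ℕ} (St : Setup I n)

def distLe (k : Fin (n+1)) (D : List (MForm I)) : ℕ → ℕ → Prop
  | 0, u => u = (St.Cmp k D).rt
  | m+1, u => distLe k D m u ∨
      ∃ u' i, distLe k D m u' ∧ St.c i = k ∧ i ∈ modsOf St.phi ∧ (St.Cmp k D).R i u' u

theorem distLe_lt {k : Fin (n+1)} {D : List (MForm I)} :
    ∀ {m u}, St.distLe k D m u → u < (St.Cmp k D).size := by
  intro m
  induction m with
  | zero => intro u h; rw [distLe] at h; subst h; exact St.cmp_rt_lt k D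
  | succ m ih =>
    intro u h
    rcases h with h | ⟨u', i, _, _, _, hR⟩
    · exact ih h
    · exact (St.cmp_supp hR).2

theorem distLe_mono {k : Fin (n+1)} {D : List (MForm I)} {m m' u} (hm : m ≤ m')
    (h : St.distLe k D m u) : St.distLe k D m' u := by
  induction m' with
  | zero => rwa [Nat.le_zero.1 hm] at h
  | succ m' ih =>
    rcases Nat.lt_or_ge m (m'+1) with hlt | hge
    · exact Or.inl (ih (by omega))
    · rwa [le_antisymm hm hge] at h

theorem distLe_rt (k : Fin (n+1)) (D : List (MForm I)) (m : ℕ) :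
    St.distLe k D m (St.Cmp k D).rt := St.distLe_mono (Nat.zero_le m) rfl

theorem distLe_pos {k : Fin (n+1)} {D : List (MForm I)} {m u}
    (h : St.distLe k D m u) (hne : u ≠ (St.Cmp k D).rt) : 1 ≤ m := by
  cases m with
  | zero => exact absurd h hne
  | succ m => omega

theorem real_Dhat (k : Fin (n+1)) {D : List (MForm I)} (h : St.FCons D) :
    (St.Cmp k D).rt ∈ semM (St.Cmp k D).R (St.Cmp k D).U (St.surr k (St.Dhat D)) :=
  (mem_semM_conj.1 (St.Cmp_real k h)).1

theorem real_CAx (k : Fin (n+1)) {D : List (MForm I)} (h : St.FCons D) :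
    (St.Cmp k D).rt ∈ semM (St.Cmp k D).R (St.Cmp k D).U (St.CAxF k St.deg) :=
  (mem_semM_conj.1 (St.Cmp_real k h)).2

theorem CAx_mono {k : Fin (n+1)} {D : List (MForm I)} {w : ℕ} :
    ∀ {m m' : ℕ}, m' ≤ m →
      w ∈ semM (St.Cmp k D).R (St.Cmp k D).U (St.CAxF k m) →
      w ∈ semM (St.Cmp k D).R (St.Cmp k D).U (St.CAxF k m') := by
  intro m
  induction m with
  | zero => intro m' hm h; rwa [Nat.le_zero.1 hm]
  | succ m ih =>
    intro m' hm h
    rcases Nat.lt_or_ge m' (m+1) with hlt | hge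
    · exact ih (by omega) (mem_semM_conj.1 h).1
    · rw [le_antisymm hm hge]; exact h

theorem CAx_Xi {k : Fin (n+1)} {D : List (MForm I)} {w : ℕ} {m : ℕ}
    (h : w ∈ semM (St.Cmp k D).R (St.Cmp k D).U (St.CAxF k m)) :
    w ∈ semM (St.Cmp k D).R (St.Cmp k D).U (St.XiF k) :=
  St.CAx_mono (Nat.zero_le m) h

theorem CAx_step {k : Fin (n+1)} {D : List (MForm I)} {w w' : ℕ} {m : ℕ} {i : I}
    (h : w ∈ semM (St.Cmp k D).R (St.Cmp k D).U (St.CAxF k (m+1)))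
    (hci : St.c i = k) (him : i ∈ modsOf St.phi) (hR : (St.Cmp k D).R i w w') :
    w' ∈ semM (St.Cmp k D).R (St.Cmp k D).U (St.CAxF k m) := by
  have h2 := (mem_semM_conj.1 h).2
  have h3 := mem_semM_bigConj.1 h2 (.box i (St.CAxF k m))
    (List.mem_map.2 ⟨i, List.mem_filter.2 ⟨him, decide_eq_true hci⟩, rfl⟩)
  exact h3 w' hR

theorem CAx_dist {k : Fin (n+1)} {D : List (MForm I)} (hD : St.FCons D) :
    ∀ {ℓ u}, St.distLe k D ℓ u → ℓ ≤ St.deg →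
      u ∈ semM (St.Cmp k D).R (St.Cmp k D).U (St.CAxF k (St.deg - ℓ)) := by
  intro ℓ
  induction ℓ with
  | zero =>
    intro u hd _
    rw [distLe] at hd
    subst hd
    simpa using St.real_CAx k hD
  | succ ℓ ih =>
    intro u hd hℓ
    rcases hd with hd | ⟨u', i, hd', hci, him, hR⟩
    · exact St.CAx_mono (by omega) (ih hd (by omega))
    · have h1 := ih hd' (by omega)
      have h2 : St.deg - ℓ = (St.deg - (ℓ+1)) + 1 := by omega
      rw [h2] at h1
      exact St.CAx_step h1 hci him hR

theorem Xi_dist {k : Fin (n+1)} {D : List (MForm I)} (hD : St.FCons D)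
    {ℓ u : ℕ} (hd : St.distLe k D ℓ u) (hℓ : ℓ ≤ St.deg) :
    u ∈ semM (St.Cmp k D).R (St.Cmp k D).U (St.XiF k) :=
  St.CAx_Xi (St.CAx_dist hD hd hℓ)

theorem descAt_sat (k : Fin (n+1)) (D : List (MForm I)) (u : ℕ) :
    u ∈ semM (St.Cmp k D).R (St.Cmp k D).U (St.surr k (St.Dhat (St.descAt k D u))) := by
  rw [Dhat, surr_bigConj, mem_semM_bigConj]
  intro a ha
  rw [List.map_map, List.mem_map] at ha
  obtain ⟨b, hb, rfl⟩ := ha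
  show u ∈ semM _ _ (St.surr k (if b ∈ St.descAt k D u then b else neg b))
  split_ifs with hmem
  · exact (St.mem_descAt.1 hmem).2
  · rw [St.surr_neg, mem_semM_neg]
    intro hsat
    exact hmem (St.mem_descAt.2 ⟨hb, hsat⟩)

theorem fcons_descAt {k : Fin (n+1)} {D : List (MForm I)} (hD : St.FCons D)
    {ℓ u : ℕ} (hd : St.distLe k D ℓ u) (hℓ : ℓ ≤ St.deg) :
    St.FCons (St.descAt k D u) := by
  by_contra h
  have hXi := St.Xi_dist hD hd hℓ
  rw [XiF, mem_semM_bigConj] at hXi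
  have h2 := hXi (neg (St.surr k (St.Dhat (St.descAt k D u))))
    (List.mem_map.2 ⟨St.descAt k D u,
      List.mem_filter.2 ⟨St.descAt_mem_sublists k D u, decide_eq_true h⟩, rfl⟩)
  rw [mem_semM_neg] at h2
  exact h2 (St.descAt_sat k D u)

theorem root_sync (k : Fin (n+1)) {D : List (MForm I)} (hD : St.FCons D)
    {b : MForm I} (hb : b ∈ St.Lit) :
    (St.Cmp k D).rt ∈ semM (St.Cmp k D).R (St.Cmp k D).U (St.surr k b) ↔ b ∈ D := by
  have h := St.real_Dhat k hD
  rw [Dhat, surr_bigConj, mem_semM_bigConj] at h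
  by_cases hmem : b ∈ D
  · have := h (St.surr k b)
      (List.mem_map.2 ⟨(if b ∈ D then b else neg b),
        List.mem_map.2 ⟨b, hb, rfl⟩, by rw [if_pos hmem]⟩)
    exact ⟨fun _ => hmem, fun _ => this⟩
  · have := h (St.surr k (neg b))
      (List.mem_map.2 ⟨(if b ∈ D then b else neg b),
        List.mem_map.2 ⟨b, hb, rfl⟩, by rw [if_neg hmem]⟩)
    rw [St.surr_neg, mem_semM_neg] at this
    exact ⟨fun hh => absurd hh this, fun hh => absurd hh hmem⟩

def SufCons (p : List (Fin (n+1) × ℕ)) : Prop :=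
  ∀ t, t <:+ p → St.FCons (St.cDesc t)

theorem sufCons_self {p : List (Fin (n+1) × ℕ)} (h : St.SufCons p) :
    St.FCons (St.cDesc p) := h p (List.suffix_refl p)

theorem sufCons_nil : St.SufCons [] := by
  intro t ht
  rw [List.suffix_nil.1 ht]
  exact St.D0_fcons

theorem sufCons_tail {s : Fin (n+1) × ℕ} {t : List (Fin (n+1) × ℕ)}
    (h : St.SufCons (s :: t)) : St.SufCons t :=
  fun r hr => h r (hr.trans (List.suffix_cons s t))

theorem sufCons_cons {s : Fin (n+1) × ℕ} {t : List (Fin (n+1) × ℕ)}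
    (h : St.SufCons t) (hc : St.FCons (St.cDesc (s :: t))) : St.SufCons (s :: t) := by
  intro r hr
  rcases List.suffix_cons_iff.1 hr with rfl | hr
  · exact hc
  · exact h r hr

def Anc (p : List (Fin (n+1) × ℕ)) (m : ℕ) : Prop :=
  ∀ (r t : List (Fin (n+1) × ℕ)) (k₀ : Fin (n+1)) (u₀ : ℕ), p = r ++ (k₀,u₀) :: t →
    ∃ ℓ₀, St.distLe k₀ (St.cDesc t) ℓ₀ u₀ ∧ ℓ₀ + r.length + m + t.length ≤ St.deg

theorem anc_nil (m : ℕ) : St.Anc [] m := by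
  intro r t k₀ u₀ h
  exact ((List.cons_ne_nil _ _) ((List.append_eq_nil_iff.1 h.symm).2)).elim

theorem anc_mono {p : List (Fin (n+1) × ℕ)} {m m' : ℕ} (hm : m' ≤ m) (h : St.Anc p m) :
    St.Anc p m' := by
  intro r t k₀ u₀ hp
  obtain ⟨ℓ₀, hd, hb⟩ := h r t k₀ u₀ hp
  exact ⟨ℓ₀, hd, by omega⟩

theorem anc_up {s : Fin (n+1) × ℕ} {p : List (Fin (n+1) × ℕ)} {m : ℕ}
    (h : St.Anc (s :: p) m) : St.Anc p m := by
  intro r t k₀ u₀ hp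
  obtain ⟨ℓ₀, hd, hb⟩ := h (s :: r) t k₀ u₀ (by rw [hp]; rfl)
  exact ⟨ℓ₀, hd, by simp at hb; omega⟩

theorem anc_step {p : List (Fin (n+1) × ℕ)} {m m' : ℕ} (hm : m' < m)
    (h : St.Anc p m) {k : Fin (n+1)} {u ℓ : ℕ} (hd : St.distLe k (St.cDesc p) ℓ u)
    (hb : ℓ + m + p.length ≤ St.deg) : St.Anc ((k,u) :: p) m' := by
  intro r t k₀ u₀ hp
  cases r with
  | nil =>
    rw [List.nil_append] at hp
    injection hp with h1 h2
    injection h1 with h1a h1b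
    subst h1a h1b h2
    exact ⟨ℓ, hd, by simp; omega⟩
  | cons s r' =>
    rw [List.cons_append] at hp
    injection hp with h1 h2
    obtain ⟨ℓ₀, hd₀, hb₀⟩ := h r' t k₀ u₀ h2
    refine ⟨ℓ₀, hd₀, ?_⟩
    simp only [List.length_cons]
    omega

end Setup
end FFMP
namespace FFMP
open MForm
open scoped Classical
namespace Setup
variable {I : Type} {n : ℕ} (St : Setup I n)

noncomputable def wAt (a : Fin St.qC) (p : List (Fin (n+1) × ℕ)) (hp : St.ValidP p)
    (k : Fin (n+1)) (u : ℕ) : St.Wld :=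
  if h : St.ValidP ((k,u) :: p) then ⟨a, ⟨(k,u) :: p, h⟩⟩ else ⟨a, ⟨p, hp⟩⟩

theorem wAt_rt (a : Fin St.qC) (p : List (Fin (n+1) × ℕ)) (hp : St.ValidP p)
    (k : Fin (n+1)) : St.wAt a p hp k (St.Cmp k (St.cDesc p)).rt = ⟨a, ⟨p, hp⟩⟩ := by
  rw [wAt]
  refine dif_neg ?_
  intro hval
  exact hval.2.2.1 rfl

theorem wAt_child (a : Fin St.qC) (p : List (Fin (n+1) × ℕ)) (hp : St.ValidP p)
    (k : Fin (n+1)) (u : ℕ) (h : St.ValidP ((k,u) :: p)) :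
    St.wAt a p hp k u = ⟨a, ⟨(k,u) :: p, h⟩⟩ := dif_pos h

theorem mem_Lit_box {i : I} {β : MForm I} (h : MForm.box i β ∈ subfsM St.phi) :
    MForm.box i β ∈ St.Lit := List.mem_filter.2 ⟨h, rfl⟩

theorem mem_Lit_prop {q : ℕ} (h : MForm.prop q ∈ subfsM St.phi) :
    MForm.prop q ∈ St.Lit := List.mem_filter.2 ⟨h, rfl⟩

theorem creator_cons_ne {k k' : Fin (n+1)} {u : ℕ} {p : List (Fin (n+1) × ℕ)}
    (h : ¬ k' = k) : creatorOf ((k,u) :: p) ≠ some k' := by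
  intro hc
  rw [creatorOf] at hc
  injection hc with hc'
  exact h hc'.symm

theorem surr_box_own {i : I} {β : MForm I} :
    St.surr (St.c i) (MForm.box i β) = MForm.box i (St.surr (St.c i) β) := by
  rw [surr, if_pos rfl]

theorem surr_box_foreign {i : I} {k : Fin (n+1)} {β : MForm I} (h : ¬ St.c i = k) :
    St.surr k (MForm.box i β) = MForm.prop (St.hIdx (MForm.box i β)) := by
  rw [surr, if_neg h]

/-- The truth lemma. -/
theorem TL (ψ : MForm I) : ψ ∈ subfsM St.phi →
    ∀ (a : Fin St.qC) (p : List (Fin (n+1) × ℕ)) (hp : St.ValidP p) (k : Fin (n+1)),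
      creatorOf p ≠ some k → St.SufCons p →
      ∀ (ℓ u : ℕ), St.distLe k (St.cDesc p) ℓ u →
      ℓ + depthM ψ + p.length ≤ St.deg → St.Anc p (depthM ψ) →
      (St.wAt a p hp k u ∈ semM St.RM St.VM ψ ↔
        u ∈ semM (St.Cmp k (St.cDesc p)).R (St.Cmp k (St.cDesc p)).U (St.surr k ψ)) := by
  induction ψ with
  | fls =>
    intro _ a p hp k hk hsuf ℓ u hd hb hanc
    exact Iff.rfl
  | prop q =>
    intro hmem a p hp k hk hsuf ℓ u hd hb hanc
    have hqLit : MForm.prop q ∈ St.Lit := St.mem_Lit_prop hmem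
    by_cases hu0 : u = (St.Cmp k (St.cDesc p)).rt
    · subst hu0
      rw [St.wAt_rt]
      have hsync := St.root_sync k (St.sufCons_self hsuf) hqLit
      rw [hsync]
      show St.VMp q p ↔ _
      cases p with
      | nil => exact Iff.rfl
      | cons s t =>
        obtain ⟨k₀, u₀⟩ := s
        show u₀ ∈ (St.cmpAt t k₀).U q ↔ _
        rw [show St.cDesc ((k₀,u₀) :: t) = St.descAt k₀ (St.cDesc t) u₀ from rfl,
          St.mem_descAt]
        constructor
        · intro h; exact ⟨hqLit, h⟩
        · intro h; exact h.2
    · have h1 : 1 ≤ ℓ := St.distLe_pos hd hu0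
      have hval : St.ValidP ((k,u) :: p) :=
        ⟨hp, hk, hu0, St.distLe_lt hd, by rw [depthM] at hb; omega⟩
      rw [St.wAt_child a p hp k u hval]
      exact Iff.rfl
  | imp f g ihf ihg =>
    intro hmem a p hp k hk hsuf ℓ u hd hb hanc
    rw [depthM] at hb
    have hbf : ℓ + depthM f + p.length ≤ St.deg := by omega
    have hbg : ℓ + depthM g + p.length ≤ St.deg := by omega
    rw [show St.surr k (f.imp g) = (St.surr k f).imp (St.surr k g) from rfl,
      mem_semM_imp, mem_semM_imp,
      ihf (imp_left_mem hmem) a p hp k hk hsuf ℓ u hd hbf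
        (St.anc_mono (le_max_left _ _) hanc),
      ihg (imp_right_mem hmem) a p hp k hk hsuf ℓ u hd hbg
        (St.anc_mono (le_max_right _ _) hanc)]
  | box i β ihβ =>
    intro hmem a p hp k hk hsuf ℓ u hd hb hanc
    have hmodi : i ∈ modsOf St.phi := mem_modsOf hmem
    have hβ : β ∈ subfsM St.phi := box_arg_mem hmem
    have hLit : MForm.box i β ∈ St.Lit := St.mem_Lit_box hmem
    -- root step: unfolding the box at the root of a component of colour `c i`
    have hstep : ∀ (a : Fin St.qC) (pb : List (Fin (n+1) × ℕ)) (hpb : St.ValidP pb),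
        creatorOf pb ≠ some (St.c i) → St.SufCons pb →
        1 + depthM β + pb.length ≤ St.deg → St.Anc pb (depthM β) →
        ((⟨a, ⟨pb, hpb⟩⟩ : St.Wld) ∈ semM St.RM St.VM (MForm.box i β) ↔
          (St.Cmp (St.c i) (St.cDesc pb)).rt ∈
            semM (St.Cmp (St.c i) (St.cDesc pb)).R (St.Cmp (St.c i) (St.cDesc pb)).U
              (MForm.box i (St.surr (St.c i) β))) := by
      intro a pb hpb hcr hsufb hbb hanb
      have hlenb : pb.length < St.deg := by omega
      constructor
      · intro h v hv
        have hdv : St.distLe (St.c i) (St.cDesc pb) 1 v :=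
          Or.inr ⟨_, i, rfl, rfl, hmodi, hv⟩
        have ihv := ihβ hβ a pb hpb (St.c i) hcr hsufb 1 v hdv (by omega) hanb
        rw [← ihv]
        apply h
        by_cases hv0 : v = (St.Cmp (St.c i) (St.cDesc pb)).rt
        · rw [hv0] at hv ⊢
          rw [St.wAt_rt]
          exact (St.edge_internal hcr hlenb).2 ⟨rfl, Or.inr ⟨rfl, hv⟩⟩
        · have hval : St.ValidP ((St.c i, v) :: pb) :=
            ⟨hpb, hcr, hv0, (St.cmp_supp hv).2, hlenb⟩
          rw [St.wAt_child _ _ _ _ _ hval]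
          exact (St.edge_internal hcr hlenb).2 ⟨rfl, Or.inl ⟨v, hv0, rfl, hv⟩⟩
      · intro h y hy
        rcases (St.edge_internal hcr hlenb).1 hy with ⟨hcopy, hcase⟩
        rcases hcase with ⟨u', hne, hypath, hR⟩ | ⟨rfl, hR⟩
        · have hdv : St.distLe (St.c i) (St.cDesc pb) 1 u' :=
            Or.inr ⟨_, i, rfl, rfl, hmodi, hR⟩
          have ihv := ihβ hβ a pb hpb (St.c i) hcr hsufb 1 u' hdv (by omega) hanb
          have hval : St.ValidP ((St.c i, u') :: pb) :=
            ⟨hpb, hcr, hne, (St.cmp_supp hR).2, hlenb⟩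
          have hyw : y = St.wAt a pb hpb (St.c i) u' := by
            rw [St.wAt_child _ _ _ _ _ hval]
            exact Prod.ext hcopy.symm (Subtype.ext hypath)
          rw [hyw]
          rw [ihv]
          exact h u' hR
        · have hdv : St.distLe (St.c i) (St.cDesc pb) 1 (St.Cmp (St.c i) (St.cDesc pb)).rt :=
            St.distLe_rt _ _ 1
          have ihv := ihβ hβ a pb hpb (St.c i) hcr hsufb 1 _ hdv (by omega) hanb
          rw [show (⟨a, ⟨pb, hpb⟩⟩ : St.Wld) = St.wAt a pb hpb (St.c i) _ from (St.wAt_rt a pb hpb (St.c i)).symm]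
          rw [ihv]
          exact h _ hR
    -- the "own colour" claim
    have hown : ∀ (a : Fin St.qC) (p : List (Fin (n+1) × ℕ)) (hp : St.ValidP p),
        creatorOf p ≠ some (St.c i) → St.SufCons p →
        ∀ (ℓ u : ℕ), St.distLe (St.c i) (St.cDesc p) ℓ u →
        ℓ + (depthM β + 1) + p.length ≤ St.deg → St.Anc p (depthM β + 1) →
        (St.wAt a p hp (St.c i) u ∈ semM St.RM St.VM (MForm.box i β) ↔
          u ∈ semM (St.Cmp (St.c i) (St.cDesc p)).R (St.Cmp (St.c i) (St.cDesc p)).U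
            (MForm.box i (St.surr (St.c i) β))) := by
      intro a p hp hk hsuf ℓ u hd hb hanc
      have hlen : p.length < St.deg := by omega
      by_cases hu0 : u = (St.Cmp (St.c i) (St.cDesc p)).rt
      · subst hu0
        rw [St.wAt_rt]
        exact hstep a p hp hk hsuf (by omega) (St.anc_mono (by omega) hanc)
      · have hval : St.ValidP ((St.c i, u) :: p) :=
          ⟨hp, hk, hu0, St.distLe_lt hd, hlen⟩
        rw [St.wAt_child _ _ _ _ _ hval]
        constructor
        · intro h v hv
          have hdv : St.distLe (St.c i) (St.cDesc p) (ℓ+1) v :=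
            Or.inr ⟨u, i, hd, rfl, hmodi, hv⟩
          have ihv := ihβ hβ a p hp (St.c i) hk hsuf (ℓ+1) v hdv (by omega)
            (St.anc_mono (by omega) hanc)
          rw [← ihv]
          apply h
          by_cases hv0 : v = (St.Cmp (St.c i) (St.cDesc p)).rt
          · rw [hv0] at hv ⊢
            rw [St.wAt_rt]
            exact (St.edge_creator rfl).2 ⟨rfl, Or.inr ⟨rfl, hv⟩⟩
          · have hval' : St.ValidP ((St.c i, v) :: p) :=
              ⟨hp, hk, hv0, (St.cmp_supp hv).2, hlen⟩
            rw [St.wAt_child _ _ _ _ _ hval']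
            exact (St.edge_creator rfl).2 ⟨rfl, Or.inl ⟨v, hv0, rfl, hv⟩⟩
        · intro h y hy
          rcases (St.edge_creator rfl).1 hy with ⟨hcopy, hcase⟩
          rcases hcase with ⟨u', hne, hypath, hR⟩ | ⟨hypath, hR⟩
          · have hdv : St.distLe (St.c i) (St.cDesc p) (ℓ+1) u' :=
              Or.inr ⟨u, i, hd, rfl, hmodi, hR⟩
            have ihv := ihβ hβ a p hp (St.c i) hk hsuf (ℓ+1) u' hdv (by omega)
              (St.anc_mono (by omega) hanc)
            have hval' : St.ValidP ((St.c i, u') :: p) :=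
              ⟨hp, hk, hne, (St.cmp_supp hR).2, hlen⟩
            have hyw : y = St.wAt a p hp (St.c i) u' := by
              rw [St.wAt_child _ _ _ _ _ hval']
              exact Prod.ext hcopy.symm (Subtype.ext hypath)
            rw [hyw, ihv]
            exact h u' hR
          · have hdv : St.distLe (St.c i) (St.cDesc p) (ℓ+1)
                (St.Cmp (St.c i) (St.cDesc p)).rt := St.distLe_rt _ _ _
            have ihv := ihβ hβ a p hp (St.c i) hk hsuf (ℓ+1) _ hdv (by omega)
              (St.anc_mono (by omega) hanc)
            have hyw : y = St.wAt a p hp (St.c i) (St.Cmp (St.c i) (St.cDesc p)).rt := by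
              rw [St.wAt_rt]
              exact Prod.ext hcopy.symm (Subtype.ext hypath)
            rw [hyw, ihv]
            exact h _ hR
    -- main case split
    rw [show depthM (MForm.box i β) = depthM β + 1 from rfl] at hb hanc
    by_cases hcol : St.c i = k
    · subst hcol
      rw [St.surr_box_own]
      exact hown a p hp hk hsuf ℓ u hd hb hanc
    · -- foreign colour
      by_cases hu0 : u = (St.Cmp k (St.cDesc p)).rt
      · subst hu0
        rw [St.wAt_rt]
        have hsync := St.root_sync k (St.sufCons_self hsuf) hLit
        rw [hsync]
        -- case split on the creator of `p`
        rcases p with - | ⟨⟨k₁, u₁⟩, t⟩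
        · -- p = [] : use hstep at (p, c i)
          have h0 := hown a [] hp (by rw [creatorOf]; exact fun h => by cases h)
            St.sufCons_nil 0 (St.Cmp (St.c i) (St.cDesc [])).rt (St.distLe_rt _ _ 0)
            (by simp only [List.length_nil]; omega)
            (St.anc_nil _)
          rw [St.wAt_rt] at h0
          rw [h0]
          rw [← St.root_sync (St.c i) (St.sufCons_self St.sufCons_nil) hLit, St.surr_box_own]
        · by_cases hk₁ : k₁ = St.c i
          · -- climb to the creator component
            subst hk₁
            have hvp := hp
            rw [St.validP_cons] at hvp
            obtain ⟨ht, hcrt, hu₁ne, hu₁lt, hlt⟩ := hvp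
            obtain ⟨ℓ₀, hd₀, hb₀⟩ := hanc [] t (St.c i) u₁ rfl
            have h0 := hown a t ht hcrt (St.sufCons_tail hsuf) ℓ₀ u₁ hd₀
              (by simp at hb₀ ⊢; omega) (St.anc_up hanc)
            have hw : St.wAt a t ht (St.c i) u₁ = ⟨a, ⟨(St.c i, u₁) :: t, hp⟩⟩ :=
              St.wAt_child a t ht (St.c i) u₁ hp
            rw [hw] at h0
            rw [h0]
            rw [show St.cDesc ((St.c i, u₁) :: t) = St.descAt (St.c i) (St.cDesc t) u₁ from rfl,
              St.mem_descAt, St.surr_box_own]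
            constructor
            · intro h; exact ⟨hLit, h⟩
            · intro h; exact h.2
          · -- creator of p is some other colour: use hstep at (p, c i)
            have hcr : creatorOf ((k₁,u₁) :: t) ≠ some (St.c i) :=
              creator_cons_ne (fun h => hk₁ h.symm)
            have h0 := hown a _ hp hcr hsuf 0 (St.Cmp (St.c i) (St.cDesc ((k₁,u₁)::t))).rt
              (St.distLe_rt _ _ 0) (by omega) (St.anc_mono (le_refl _) hanc)
            rw [St.wAt_rt] at h0
            rw [h0]
            rw [← St.root_sync (St.c i) (St.sufCons_self hsuf) hLit, St.surr_box_own]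
      · -- u ≠ rt, foreign: descend into the child component
        have hℓ1 : 1 ≤ ℓ := St.distLe_pos hd hu0
        have hlen2 : p.length + 2 ≤ St.deg := by omega
        have hval : St.ValidP ((k,u) :: p) :=
          ⟨hp, hk, hu0, St.distLe_lt hd, by omega⟩
        rw [St.wAt_child a p hp k u hval]
        have hDw : St.FCons (St.cDesc ((k,u) :: p)) :=
          St.fcons_descAt (St.sufCons_self hsuf) hd (by omega)
        have hsufc : St.SufCons ((k,u) :: p) := St.sufCons_cons hsuf hDw
        have hcr2 : creatorOf ((k,u) :: p) ≠ some (St.c i) := creator_cons_ne hcol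
        have hanc2 : St.Anc ((k,u) :: p) (depthM β) :=
          St.anc_step (Nat.lt_succ_self _) hanc hd hb
        have h0 := hstep a ((k,u) :: p) hval hcr2 hsufc
          (by simp only [List.length_cons]; omega) hanc2
        have h1 : ((St.Cmp (St.c i) (St.cDesc ((k,u) :: p))).rt ∈
            semM (St.Cmp (St.c i) (St.cDesc ((k,u) :: p))).R
              (St.Cmp (St.c i) (St.cDesc ((k,u) :: p))).U
              (MForm.box i (St.surr (St.c i) β))) ↔
            MForm.box i β ∈ St.cDesc ((k,u) :: p) := by
          rw [← St.surr_box_own]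
          exact St.root_sync (St.c i) (St.sufCons_self hsufc) hLit
        have h2 : (u ∈ semM (St.Cmp k (St.cDesc p)).R (St.Cmp k (St.cDesc p)).U
            (St.surr k (MForm.box i β))) ↔ MForm.box i β ∈ St.cDesc ((k,u) :: p) := by
          rw [show St.cDesc ((k,u) :: p) = St.descAt k (St.cDesc p) u from rfl,
            St.mem_descAt]
          exact ⟨fun h => ⟨hLit, h⟩, fun h => h.2⟩
        exact h0.trans (h1.trans h2.symm)

end Setup
end FFMP
namespace FFMP
open MForm
open scoped Classical

theorem depthM_le_of_mem {I : Type} : ∀ {χ ψ : MForm I}, ψ ∈ subfsM χ → depthM ψ ≤ depthM χ := by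
  intro χ
  induction χ with
  | prop p =>
    intro ψ h; simp only [subfsM, List.mem_singleton] at h; subst h; exact le_refl _
  | fls =>
    intro ψ h; simp only [subfsM, List.mem_singleton] at h; subst h; exact le_refl _
  | imp a b iha ihb =>
    intro ψ h
    rcases List.mem_cons.1 h with rfl | h
    · exact le_refl _
    · rcases List.mem_append.1 h with h | h
      · exact le_trans (iha h) (le_max_left _ _)
      · exact le_trans (ihb h) (le_max_right _ _)
  | box i a iha =>
    intro ψ h
    rcases List.mem_cons.1 h with rfl | h
    · exact le_refl _
    · exact le_trans (iha h) (by rw [depthM]; omega)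

namespace Setup
variable {I : Type} {n : ℕ} (St : Setup I n)

theorem fusion_valid {ψ : MForm I} (hψ : ψ ∈ FusionLogic St.Ls) (w : St.Wld) :
    w ∈ semM St.RM St.VM ψ := by
  have hT : IsNormalIn Set.univ
      {χ : MForm I | ∀ (V' : ℕ → Set St.Wld) (w : St.Wld), w ∈ semM St.RM V' χ} := by
    constructor
    · intro χ _; exact usesOnly_univ χ
    · intro χ _ ht V' w; exact isTaut_semM ht w
    · intro i _ a b _ _ V' w
      intro h1 h2 v hv
      exact h1 v hv (h2 v hv)
    · intro a b ha hab V' w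
      exact hab V' w (ha V' w)
    · intro i _ a ha V' w v _
      exact ha V' v
    · intro σ _ a ha V' w
      exact (substP_semM _ _ σ a w).2 (ha _ w)
  exact mem_fusion.1 hψ _ hT (fun j χ hχ => fun V' w => St.Ls_valid j hχ V' w) St.VM w

theorem qC_pos : 0 < St.qC := Finset.prod_pos (fun l _ => St.mG_pos l)

noncomputable def rootW : St.Wld := (⟨0, St.qC_pos⟩, ⟨[], trivial⟩)

theorem root_eval : ∀ ψ : MForm I, ψ ∈ subfsM St.phi →
    (St.rootW ∈ semM St.RM St.VM ψ ↔ EvalD St.D0 ψ) := by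
  intro ψ
  induction ψ with
  | prop q => intro _; exact Iff.rfl
  | fls => intro _; exact Iff.rfl
  | imp a b iha ihb =>
    intro hmem
    rw [mem_semM_imp, iha (imp_left_mem hmem), ihb (imp_right_mem hmem)]
    exact Iff.rfl
  | box i β _ =>
    intro hmem
    have hLit : MForm.box i β ∈ St.Lit := St.mem_Lit_box hmem
    have hdep : depthM (MForm.box i β) ≤ St.deg := depthM_le_of_mem hmem
    have h0 := St.TL (MForm.box i β) hmem ⟨0, St.qC_pos⟩ [] trivial (St.c i)
      (fun h => by cases h) St.sufCons_nil 0 (St.Cmp (St.c i) (St.cDesc [])).rt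
      (St.distLe_rt _ _ 0)
      (by simp only [List.length_nil]; omega) (St.anc_nil _)
    rw [St.wAt_rt ⟨0, St.qC_pos⟩ [] trivial (St.c i)] at h0
    show (⟨⟨0, St.qC_pos⟩, ⟨[], trivial⟩⟩ : St.Wld) ∈ semM St.RM St.VM (MForm.box i β) ↔ _
    refine h0.trans ?_
    rw [St.root_sync (St.c i) (St.sufCons_self St.sufCons_nil) hLit]
    exact Iff.rfl

theorem phi_fails : St.rootW ∉ semM St.RM St.VM St.phi := by
  intro h
  exact St.D0_not_eval ((St.root_eval St.phi (self_mem_subfsM St.phi)).1 h)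

end Setup
end FFMP

/-- If the normal modal logics `L_j` (in pairwise disjoint
signatures), each characterized by a class of Kripke frames, all have the
finite model property, then so does their fusion. -/
theorem fusion_fmp {I : Type} (n : ℕ) (c : I → Fin (n + 1))
    (Ls : Fin (n + 1) → Set (MForm I))
    (hnorm : ∀ j, IsNormalIn {i | c i = j} (Ls j))
    (hchar : ∀ j, ∃ Fs : Set (Frame {i : I // c i = j}),
      CharacterizedBy c j (Ls j) Fs)
    (hfmp : ∀ j, HasFMP {i | c i = j} (Ls j)) :
    HasFMP Set.univ (FusionLogic Ls) := by
  intro φ _ hφ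
  let St : FFMP.Setup I n := ⟨c, Ls, hnorm, hfmp, φ, hφ⟩
  refine ⟨St.Wld, inferInstance, St.RM, St.VM, ?_, ?_⟩
  · intro ψ hψ w
    exact St.fusion_valid hψ w
  · exact ⟨St.rootW, St.phi_fails⟩
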